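/- arXiv:1404.0861 — 3 statements merged into one kernel-verified Lean document; each statement's English description precedes it below -/
import Mathlib

section
/- Let q be a prime power and n ≥ 1. Then the finite unitary group U_n(F_q) has order q^{n(n-1)/2} · ∏_{i=1}^{n} (q^i − (−1)^i). -/
open Matrix Finset

set_option linter.unusedSectionVars false
set_option linter.unusedVariables false

namespace UnitaryGroupCard


section FieldFacts
variable {K : Type*} [Field K] [Fintype K] [DecidableEq K] {q : ℕ}

lemma card_root_le (p : Polynomial K) (hp : p ≠ 0) :
    (Finset.univ.filter fun x : K => Polynomial.eval x p = 0).card ≤ p.natDegree := by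
  refine le_trans (Finset.card_le_card ?_) ((Multiset.toFinset_card_le p.roots).trans
    (Polynomial.card_roots' p))
  intro x hx
  simp only [Finset.mem_filter, Finset.mem_univ, true_and] at hx
  simp [Polynomial.mem_roots, hp, Polynomial.IsRoot, hx]

lemma card_fixed_le (hq : 2 ≤ q) :
    (Finset.univ.filter fun x : K => x ^ q = x).card ≤ q := by
  have hlt : (Polynomial.X : Polynomial K).natDegree < (Polynomial.X ^ q : Polynomial K).natDegree := by
    simp only [Polynomial.natDegree_X_pow, Polynomial.natDegree_X]; omega
  have hd : (Polynomial.X ^ q - Polynomial.X : Polynomial K).natDegree = q := by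
    rw [Polynomial.natDegree_sub_eq_left_of_natDegree_lt hlt, Polynomial.natDegree_X_pow]
  have hp : (Polynomial.X ^ q - Polynomial.X : Polynomial K) ≠ 0 := by
    intro h0; rw [h0] at hd; simp at hd; omega
  have h := card_root_le (Polynomial.X ^ q - Polynomial.X : Polynomial K) hp
  rw [hd] at h
  refine le_trans (le_of_eq ?_) h
  congr 1; ext x; simp [sub_eq_zero]

lemma card_antifixed_le (hq : 2 ≤ q) :
    (Finset.univ.filter fun x : K => x + x ^ q = 0).card ≤ q := by
  have hlt : (Polynomial.X : Polynomial K).natDegree < (Polynomial.X ^ q : Polynomial K).natDegree := by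
    simp only [Polynomial.natDegree_X_pow, Polynomial.natDegree_X]; omega
  have hd : (Polynomial.X ^ q + Polynomial.X : Polynomial K).natDegree = q := by
    rw [Polynomial.natDegree_add_eq_left_of_natDegree_lt hlt, Polynomial.natDegree_X_pow]
  have hp : (Polynomial.X ^ q + Polynomial.X : Polynomial K) ≠ 0 := by
    intro h0; rw [h0] at hd; simp at hd; omega
  have h := card_root_le (Polynomial.X ^ q + Polynomial.X : Polynomial K) hp
  rw [hd] at h
  refine le_trans (le_of_eq ?_) h
  congr 1; ext x; constructor <;> intro hx <;> simp at * <;> linear_combination hx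

lemma card_norm_fiber_le (c : K) :
    (Finset.univ.filter fun x : K => x ^ (q+1) = c).card ≤ q + 1 := by
  have hd : (Polynomial.X ^ (q+1) - Polynomial.C c : Polynomial K).natDegree = q + 1 := by
    rw [Polynomial.natDegree_X_pow_sub_C]
  have hp : (Polynomial.X ^ (q+1) - Polynomial.C c : Polynomial K) ≠ 0 := by
    intro h0; rw [h0] at hd; simp at hd
  have h := card_root_le _ hp
  rw [hd] at h
  refine le_trans (le_of_eq ?_) h
  congr 1; ext x; simp [sub_eq_zero]

lemma pow_q_q (hcard : Fintype.card K = q ^ 2) (x : K) : (x ^ q) ^ q = x := by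
  rw [← pow_mul, ← sq, ← hcard, FiniteField.pow_card]

lemma norm_fixed (hcard : Fintype.card K = q ^ 2) (x : K) :
    (x ^ (q+1)) ^ q = x ^ (q+1) := by
  have h := pow_q_q hcard x
  calc (x ^ (q+1)) ^ q = (x^q)^q * x^q := by ring
  _ = x ^ (q+1) := by rw [h]; ring

lemma fiber_card_eq (c : K) (x₀ : K) (hx₀ : x₀ ^ (q+1) = c) (hc : c ≠ 0) :
    (Finset.univ.filter fun x : K => x ^ (q+1) = c).card
      = (Finset.univ.filter fun x : K => x ^ (q+1) = 1).card := by
  have hx0 : x₀ ≠ 0 := by rintro rfl; rw [← hx₀] at hc; simp at hc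
  refine Finset.card_nbij' (fun x => x / x₀) (fun x => x * x₀) ?_ ?_ ?_ ?_
  all_goals intro x hx
  · simp only [Finset.mem_coe, Finset.mem_filter, Finset.mem_univ, true_and] at *
    rw [div_pow, hx₀, hx, div_self hc]
  · simp only [Finset.mem_coe, Finset.mem_filter, Finset.mem_univ, true_and] at *
    rw [mul_pow, hx₀, hx, one_mul]
  · field_simp
  · field_simp

lemma fiber_zero : (Finset.univ.filter fun x : K => x ^ (q+1) = 0).card = 1 := by
  rw [Finset.card_eq_one]
  refine ⟨0, ?_⟩
  ext x; simp [pow_eq_zero_iff, Nat.succ_ne_zero]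

lemma norm_counts (hq : 2 ≤ q) (hcard : Fintype.card K = q ^ 2) :
    (Finset.univ.image (fun x : K => x ^ (q+1))).card = q ∧
    (Finset.univ.filter fun x : K => x ^ (q+1) = 1).card = q + 1 := by
  set F := (Finset.univ.image (fun x : K => x ^ (q+1))) with hF
  set k := (Finset.univ.filter fun x : K => x ^ (q+1) = 1).card with hk
  have hpart : (q ^ 2 : ℕ) = ∑ c ∈ F, (Finset.univ.filter fun x : K => x ^ (q+1) = c).card := by
    rw [← hcard, ← Finset.card_univ]
    exact Finset.card_eq_sum_card_fiberwise (fun x _ => Finset.mem_image_of_mem _ (Finset.mem_univ x))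
  have h0F : (0 : K) ∈ F := by
    refine Finset.mem_image.2 ⟨0, Finset.mem_univ _, ?_⟩; simp
  have hfib : ∀ c ∈ F, (Finset.univ.filter fun x : K => x ^ (q+1) = c).card
      = if c = 0 then 1 else k := by
    intro c hc
    rcases Finset.mem_image.1 hc with ⟨x₀, _, hx₀⟩
    by_cases h : c = 0
    · rw [if_pos h, h]; exact fiber_zero
    · rw [if_neg h, hk]; exact fiber_card_eq c x₀ hx₀ h
  have hsum : (q^2 : ℕ) = 1 + (F.card - 1) * k := by
    rw [hpart, Finset.sum_congr rfl hfib, ← Finset.add_sum_erase _ _ h0F, if_pos rfl]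
    congr 1
    rw [Finset.sum_congr rfl (fun x hx => if_neg (Finset.ne_of_mem_erase hx)),
      Finset.sum_const, Finset.card_erase_of_mem h0F, smul_eq_mul]
  have hFle : F.card ≤ q := by
    refine le_trans (Finset.card_le_card ?_) (card_fixed_le hq)
    intro c hc
    rcases Finset.mem_image.1 hc with ⟨x₀, _, hx₀⟩
    simp only [Finset.mem_filter, Finset.mem_univ, true_and]
    rw [← hx₀]; exact norm_fixed hcard x₀
  have hkle : k ≤ q + 1 := card_norm_fiber_le 1
  have hF1 : 1 ≤ F.card := Finset.card_pos.2 ⟨0, h0F⟩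
  -- conclude
  have key : (F.card - 1) * k = q^2 - 1 := by omega
  have hq1 : (q - 1) * (q + 1) = q ^ 2 - 1 := by
    zify [show 1 ≤ q by omega, show 1 ≤ q ^ 2 by nlinarith]
    ring
  have h1 : (F.card - 1) * k ≤ (q - 1) * k := Nat.mul_le_mul_right k (by omega)
  have h2 : (q - 1) * k ≤ (q - 1) * (q + 1) := Nat.mul_le_mul_left _ hkle
  have hqk : (q - 1) * k = q ^ 2 - 1 := by omega
  have hkval : k = q + 1 := by
    have hpos : 0 < q - 1 := by omega
    exact Nat.eq_of_mul_eq_mul_left hpos (by omega)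
  constructor
  · rw [hkval] at key
    have h3 : (F.card - 1) * (q+1) = (q-1) * (q+1) := by omega
    have := Nat.eq_of_mul_eq_mul_right (by omega : 0 < q + 1) h3
    omega
  · exact hkval

lemma norm_surj (hq : 2 ≤ q) (hcard : Fintype.card K = q ^ 2) (c : K) (hc : c ^ q = c) :
    ∃ x : K, x ^ (q+1) = c := by
  have h := (norm_counts hq hcard).1
  have hsub : (Finset.univ.image (fun x : K => x ^ (q+1)))
      ⊆ Finset.univ.filter fun x : K => x ^ q = x := by
    intro d hd
    rcases Finset.mem_image.1 hd with ⟨x₀, _, hx₀⟩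
    simp only [Finset.mem_filter, Finset.mem_univ, true_and]
    rw [← hx₀]; exact norm_fixed hcard x₀
  have := Finset.eq_of_subset_of_card_le hsub (by rw [h]; exact card_fixed_le hq)
  have hcF : c ∈ (Finset.univ.image (fun x : K => x ^ (q+1))) := by
    rw [this]; simp [hc]
  rcases Finset.mem_image.1 hcF with ⟨x, _, hx⟩
  exact ⟨x, hx⟩

end FieldFacts

section Sphere
variable {K : Type*} [Field K] [Fintype K] [DecidableEq K] {q : ℕ}


lemma neg_pow_q (hq : 2 ≤ q) (hadd : ∀ x y : K, (x+y)^q = x^q + y^q) (a : K) :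
    (-a) ^ q = -(a ^ q) := by
  have h := hadd a (-a)
  rw [add_neg_cancel, zero_pow (by omega : q ≠ 0)] at h
  linear_combination -h

lemma sub_pow_q (hq : 2 ≤ q) (hadd : ∀ x y : K, (x+y)^q = x^q + y^q) (a b : K) :
    (a - b) ^ q = a ^ q - b ^ q := by
  have h := hadd a (-b)
  rw [neg_pow_q hq hadd] at h
  rw [sub_eq_add_neg, h, sub_eq_add_neg]

/-- number of points on the sphere of radius c -/
def Sc (q : ℕ) {K : Type*} [Field K] [Fintype K] [DecidableEq K] (m : ℕ) (c : K) : ℕ :=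
  (Finset.univ.filter fun v : Fin m → K => ∑ j, v j ^ (q+1) = c).card

lemma Sc_zero_zero : Sc q 0 (0:K) = 1 := by
  rw [Sc]
  rw [Finset.card_eq_one]
  refine ⟨fun j => j.elim0, ?_⟩
  ext v
  simp only [Finset.mem_filter, Finset.mem_univ, true_and, Finset.mem_singleton]
  constructor
  · intro _; ext j; exact j.elim0
  · rintro rfl; simp

lemma Sc_zero_one : Sc q 0 (1:K) = 0 := by
  rw [Sc, Finset.card_eq_zero]
  ext v
  simp only [Finset.mem_filter, Finset.mem_univ, true_and, Finset.notMem_empty, iff_false]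
  simp

lemma Sc_scale (m : ℕ) (d x₀ : K) (hx₀ : x₀ ^ (q+1) = d) (hd : d ≠ 0) :
    Sc q m d = Sc q m (1:K) := by
  have hx0 : x₀ ≠ 0 := by rintro rfl; rw [← hx₀] at hd; simp at hd
  refine Finset.card_nbij' (fun v j => v j / x₀) (fun v j => v j * x₀) ?_ ?_ ?_ ?_
  all_goals intro v hv
  · simp only [Finset.mem_coe, Finset.mem_filter, Finset.mem_univ, true_and] at *
    simp_rw [div_pow, hx₀, ← Finset.sum_div, hv, div_self hd]
  · simp only [Finset.mem_coe, Finset.mem_filter, Finset.mem_univ, true_and] at *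
    simp_rw [mul_pow, hx₀, ← Finset.sum_mul, hv, one_mul]
  · field_simp
  · field_simp

lemma Sc_fixed (hq : 2 ≤ q) (hcard : Fintype.card K = q ^ 2) (m : ℕ) (d : K)
    (hfix : d ^ q = d) (hd : d ≠ 0) : Sc q m d = Sc q m (1:K) := by
  obtain ⟨x₀, hx₀⟩ := norm_surj hq hcard d hfix
  exact Sc_scale m d x₀ hx₀ hd

lemma Sc_rec (m : ℕ) (c : K) :
    Sc q (m+1) c = ∑ x : K, Sc q m (c - x ^ (q+1)) := by
  rw [Sc, Finset.card_eq_sum_card_fiberwise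
    (f := fun v : Fin (m+1) → K => v 0) (t := Finset.univ) (fun _ _ => Finset.mem_univ _)]
  refine Finset.sum_congr rfl fun x _ => ?_
  refine Finset.card_nbij' (fun v => Fin.tail v) (fun w => Fin.cons x w) ?_ ?_ ?_ ?_
  · intro v hv
    simp only [Finset.mem_coe, Finset.mem_filter, Finset.mem_univ, true_and] at *
    obtain ⟨hsum, h0⟩ := hv
    rw [Fin.sum_univ_succ] at hsum
    rw [eq_sub_iff_add_eq, ← h0]
    rw [← hsum]
    simp [Fin.tail]
    ring
  · intro w hw
    simp only [Finset.mem_coe, Finset.mem_filter, Finset.mem_univ, true_and] at *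
    constructor
    · rw [Fin.sum_univ_succ]
      simp only [Fin.cons_zero, Fin.cons_succ]
      rw [hw]; ring
    · simp
  · intro v hv
    simp only [Finset.mem_coe, Finset.mem_filter, Finset.mem_univ, true_and] at hv
    rw [← hv.2]; exact Fin.cons_self_tail v
  · intro w _; ext j; simp [Fin.tail]

lemma Sc_rec_zero (hq : 2 ≤ q) (hcard : Fintype.card K = q ^ 2)
    (hadd : ∀ x y : K, (x+y)^q = x^q + y^q) (m : ℕ) :
    Sc q (m+1) (0:K) = Sc q m (0:K) + (q^2 - 1) * Sc q m (1:K) := by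
  rw [Sc_rec]
  rw [← Finset.add_sum_erase _ _ (Finset.mem_univ (0:K))]
  have h0 : (0:K) - 0 ^ (q+1) = 0 := by simp
  rw [h0]
  congr 1
  rw [Finset.sum_congr rfl (fun x hx => ?_), Finset.sum_const, smul_eq_mul,
    Finset.card_erase_of_mem (Finset.mem_univ _), Finset.card_univ, hcard]
  have hx0 : x ≠ 0 := Finset.ne_of_mem_erase hx
  have hNx : x ^ (q+1) ≠ 0 := pow_ne_zero _ hx0
  have : (0:K) - x^(q+1) = -(x^(q+1)) := by ring
  rw [this]
  refine Sc_fixed hq hcard m _ ?_ (by simpa using hNx)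
  rw [neg_pow_q hq hadd, norm_fixed hcard]

lemma Sc_rec_one (hq : 2 ≤ q) (hcard : Fintype.card K = q ^ 2)
    (hadd : ∀ x y : K, (x+y)^q = x^q + y^q) (m : ℕ) :
    Sc q (m+1) (1:K) = (q+1) * Sc q m (0:K) + (q^2 - (q+1)) * Sc q m (1:K) := by
  rw [Sc_rec]
  rw [← Finset.sum_filter_add_sum_filter_not Finset.univ (fun x : K => x ^ (q+1) = 1)]
  congr 1
  · rw [Finset.sum_congr rfl (fun x hx => ?_), Finset.sum_const, smul_eq_mul,
      (norm_counts hq hcard).2]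
    simp only [Finset.mem_filter, Finset.mem_univ, true_and] at hx
    rw [hx, sub_self]
  · rw [Finset.sum_congr rfl (fun x hx => ?_), Finset.sum_const, smul_eq_mul,
      Finset.filter_not, Finset.card_sdiff_of_subset (Finset.filter_subset _ _),
      (norm_counts hq hcard).2, Finset.card_univ, hcard]
    simp only [Finset.mem_filter, Finset.mem_univ, true_and] at hx
    refine Sc_fixed hq hcard m _ ?_ (sub_ne_zero.2 (Ne.symm hx))
    rw [sub_pow_q hq hadd, one_pow, norm_fixed hcard]

lemma Sc_closed (hq : 2 ≤ q) (hcard : Fintype.card K = q ^ 2)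
    (hadd : ∀ x y : K, (x+y)^q = x^q + y^q) (m : ℕ) :
    (Sc q (m+1) (1:K) : ℤ) = (q:ℤ)^m * ((q:ℤ)^(m+1) - (-1)^(m+1)) ∧
    (Sc q (m+1) (0:K) : ℤ) = (q:ℤ)^(2*m+1) + (-1)^(m+1) * ((q:ℤ)^(m+1) - (q:ℤ)^m) := by
  induction m with
  | zero =>
    constructor
    · rw [Sc_rec_one hq hcard hadd, Sc_zero_zero, Sc_zero_one]
      push_cast; ring
    · rw [Sc_rec_zero hq hcard hadd, Sc_zero_zero, Sc_zero_one]
      push_cast; ring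
  | succ m ih =>
    obtain ⟨ih1, ih0⟩ := ih
    have hcast : ((q^2 - 1 : ℕ) : ℤ) = (q:ℤ)^2 - 1 := by
      push_cast [show 1 ≤ q^2 by nlinarith]; ring
    have hcast2 : ((q^2 - (q+1) : ℕ) : ℤ) = (q:ℤ)^2 - (q+1) := by
      push_cast [show q+1 ≤ q^2 by nlinarith]; ring
    constructor
    · rw [Sc_rec_one hq hcard hadd]
      push_cast [hcast2]
      rw [ih1, ih0]
      ring
    · rw [Sc_rec_zero hq hcard hadd]
      push_cast [hcast]
      rw [ih1, ih0]
      ring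

end Sphere

section MatrixPart
variable {K : Type*} [Field K] [Fintype K] [DecidableEq K] {q : ℕ}

/-- conjugate transpose with respect to x ↦ x^q -/
def st (q : ℕ) {K : Type*} [Field K] {a b : ℕ} (A : Matrix (Fin a) (Fin b) K) :
    Matrix (Fin b) (Fin a) K :=
  Matrix.of fun i j => (A j i) ^ q

lemma st_apply {a b : ℕ} (A : Matrix (Fin a) (Fin b) K) (i j) :
    st q A i j = (A j i) ^ q := rfl

lemma pow_sum_q (hq : 2 ≤ q) (hadd : ∀ x y : K, (x+y)^q = x^q + y^q) {ι : Type*}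
    (s : Finset ι) (f : ι → K) : (∑ k ∈ s, f k) ^ q = ∑ k ∈ s, (f k) ^ q := by
  let F : K →+* K :=
    { toFun := fun x => x ^ q, map_one' := one_pow q, map_mul' := fun x y => mul_pow x y q,
      map_zero' := zero_pow (by omega : q ≠ 0), map_add' := hadd }
  exact map_sum F f s

lemma st_mul (hq : 2 ≤ q) (hadd : ∀ x y : K, (x+y)^q = x^q + y^q) {a b c : ℕ}
    (A : Matrix (Fin a) (Fin b) K) (B : Matrix (Fin b) (Fin c) K) :
    st q (A * B) = st q B * st q A := by
  ext i j
  simp only [st_apply, Matrix.mul_apply]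
  rw [pow_sum_q hq hadd]
  refine Finset.sum_congr rfl fun k _ => ?_
  rw [mul_pow, mul_comm]

lemma st_one (hq : 2 ≤ q) {a : ℕ} : st q (1 : Matrix (Fin a) (Fin a) K) = 1 := by
  ext i j
  simp only [st_apply, Matrix.one_apply]
  by_cases h : j = i
  · simp [h]
  · rw [if_neg h, if_neg (fun hh => h hh.symm), zero_pow (by omega : q ≠ 0)]

lemma st_st (hcard : Fintype.card K = q ^ 2) {a b : ℕ} (A : Matrix (Fin a) (Fin b) K) :
    st q (st q A) = A := by
  ext i j
  simp only [st_apply]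
  rw [← pow_mul, ← sq, ← hcard, FiniteField.pow_card]

lemma st_det (hq : 2 ≤ q) (hadd : ∀ x y : K, (x+y)^q = x^q + y^q) {a : ℕ}
    (A : Matrix (Fin a) (Fin a) K) : (st q A).det = A.det ^ q := by
  have hσ : ∃ f : K →+* K, ∀ x, f x = x ^ q :=
    ⟨{ toFun := fun x => x ^ q, map_one' := one_pow q, map_mul' := fun x y => mul_pow x y q,
       map_zero' := zero_pow (by omega : q ≠ 0), map_add' := hadd }, fun _ => rfl⟩
  obtain ⟨f, hf⟩ := hσ
  have : st q A = (Aᵀ).map f := by ext i j; simp [st_apply, hf, Matrix.map_apply]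
  rw [this]
  rw [show (Aᵀ).map f = f.mapMatrix Aᵀ from rfl, ← RingHom.map_det, Matrix.det_transpose, hf]

/-- block diagonal matrix diag(1, A) -/
def bd {K : Type*} [Field K] {m : ℕ} (A : Matrix (Fin m) (Fin m) K) :
    Matrix (Fin (m+1)) (Fin (m+1)) K :=
  Matrix.of fun i j =>
    Fin.cases (Fin.cases 1 (fun _ => 0) j) (fun i' => Fin.cases 0 (fun j' => A i' j') j) i

@[simp] lemma bd_zero_zero {m : ℕ} (A : Matrix (Fin m) (Fin m) K) : bd A 0 0 = 1 := rfl
@[simp] lemma bd_zero_succ {m : ℕ} (A : Matrix (Fin m) (Fin m) K) (j : Fin m) :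
    bd A 0 j.succ = 0 := by simp [bd]
@[simp] lemma bd_succ_zero {m : ℕ} (A : Matrix (Fin m) (Fin m) K) (i : Fin m) :
    bd A i.succ 0 = 0 := by simp [bd]
@[simp] lemma bd_succ_succ {m : ℕ} (A : Matrix (Fin m) (Fin m) K) (i j : Fin m) :
    bd A i.succ j.succ = A i j := by simp [bd]

lemma bd_inj {m : ℕ} {A B : Matrix (Fin m) (Fin m) K} (h : bd A = bd B) : A = B := by
  ext i j
  have := congrFun (congrFun h i.succ) j.succ
  simpa using this

lemma bd_mul {m : ℕ} (A B : Matrix (Fin m) (Fin m) K) : bd A * bd B = bd (A * B) := by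
  ext i j
  rw [Matrix.mul_apply, Fin.sum_univ_succ]
  refine Fin.cases ?_ (fun i' => ?_) i <;> refine Fin.cases ?_ (fun j' => ?_) j <;>
    simp [Matrix.mul_apply]

lemma bd_one {m : ℕ} : bd (1 : Matrix (Fin m) (Fin m) K) = 1 := by
  ext i j
  refine Fin.cases ?_ (fun i' => ?_) i <;> refine Fin.cases ?_ (fun j' => ?_) j <;>
    simp [Matrix.one_apply, Fin.succ_ne_zero, (Fin.succ_ne_zero _).symm, Fin.succ_inj]

lemma st_bd (hq : 2 ≤ q) {m : ℕ} (A : Matrix (Fin m) (Fin m) K) :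
    st q (bd A) = bd (st q A) := by
  ext i j
  refine Fin.cases ?_ (fun i' => ?_) i <;> refine Fin.cases ?_ (fun j' => ?_) j <;>
    simp [st_apply, zero_pow (by omega : q ≠ 0)]

lemma bd_mul_row_zero {m : ℕ} (A : Matrix (Fin m) (Fin m) K)
    (P : Matrix (Fin (m+1)) (Fin (m+1)) K) : (bd A * P) 0 = P 0 := by
  ext j
  rw [Matrix.mul_apply, Fin.sum_univ_succ]
  simp

lemma bd_det {m : ℕ} (A : Matrix (Fin m) (Fin m) K) : (bd A).det = A.det := by
  rw [Matrix.det_succ_row_zero, Fin.sum_univ_succ]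
  have h1 : ∀ j : Fin m, bd A 0 j.succ = 0 := bd_zero_succ A
  simp only [h1, bd_zero_zero, mul_zero, zero_mul, Finset.sum_const_zero, add_zero,
    mul_one, one_mul, Fin.val_zero, pow_zero]
  have : (bd A).submatrix Fin.succ (Fin.succAbove 0) = A := by
    ext i j
    rw [Matrix.submatrix_apply, Fin.succAbove_zero, bd_succ_succ]
  rw [this]

end MatrixPart

section MatrixPart2
variable {K : Type*} [Field K] [Fintype K] [DecidableEq K] {q : ℕ}

-- ============================================




/-- hermitian form associated to H -/
def fm (q : ℕ) {K : Type*} [Field K] {m : ℕ} (H : Matrix (Fin m) (Fin m) K)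
    (u w : Fin m → K) : K :=
  ∑ k, ∑ l, u k * H k l * (w l) ^ q

lemma gram_apply {m : ℕ} (H P : Matrix (Fin m) (Fin m) K) (i j : Fin m) :
    (P * H * st q P) i j = fm q H (P i) (P j) := by
  rw [fm, Finset.sum_comm]
  simp only [Matrix.mul_apply, st_apply, Finset.sum_mul]

lemma fm_smul {m : ℕ} (H : Matrix (Fin m) (Fin m) K) (c : K) (u : Fin m → K) :
    fm q H (c • u) (c • u) = c ^ (q+1) * fm q H u u := by
  simp only [fm, Pi.smul_apply, smul_eq_mul, Finset.mul_sum, mul_pow]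
  refine Finset.sum_congr rfl fun k _ => Finset.sum_congr rfl fun l _ => ?_
  ring

lemma fm_add_left {m : ℕ} (H : Matrix (Fin m) (Fin m) K) (u v w : Fin m → K) :
    fm q H (u + v) w = fm q H u w + fm q H v w := by
  simp only [fm, Pi.add_apply, add_mul, Finset.sum_add_distrib]

lemma fm_add_right (hq : 2 ≤ q) (hadd : ∀ x y : K, (x+y)^q = x^q + y^q)
    {m : ℕ} (H : Matrix (Fin m) (Fin m) K) (u v w : Fin m → K) :
    fm q H u (v + w) = fm q H u v + fm q H u w := by
  simp only [fm, Pi.add_apply]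
  rw [← Finset.sum_add_distrib]
  refine Finset.sum_congr rfl fun k _ => ?_
  rw [← Finset.sum_add_distrib]
  refine Finset.sum_congr rfl fun l _ => ?_
  rw [hadd, mul_add]

lemma fm_symm (hq : 2 ≤ q) (hadd : ∀ x y : K, (x+y)^q = x^q + y^q)
    (hcard : Fintype.card K = q ^ 2) {m : ℕ} {H : Matrix (Fin m) (Fin m) K}
    (hH : st q H = H) (u w : Fin m → K) :
    (fm q H w u) ^ q = fm q H u w := by
  rw [fm, pow_sum_q hq hadd]
  rw [Finset.sum_congr rfl (fun k (_ : k ∈ Finset.univ) => pow_sum_q hq hadd Finset.univ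
    (fun l => w k * H k l * u l ^ q)), Finset.sum_comm, fm]
  refine Finset.sum_congr rfl fun a _ => Finset.sum_congr rfl fun b _ => ?_
  rw [mul_pow, mul_pow, pow_q_q hcard]
  have hHlk : (H b a) ^ q = H a b := by
    have h2 := congrFun (congrFun hH a) b
    rw [st_apply] at h2
    exact h2
  rw [hHlk]
  ring

lemma fm_diag_fixed (hq : 2 ≤ q) (hadd : ∀ x y : K, (x+y)^q = x^q + y^q)
    (hcard : Fintype.card K = q ^ 2) {m : ℕ} {H : Matrix (Fin m) (Fin m) K}
    (hH : st q H = H) (u : Fin m → K) : (fm q H u u) ^ q = fm q H u u :=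
  fm_symm hq hadd hcard hH u u

/-- a nondegenerate hermitian form has a vector of norm 1 -/
lemma fm_exists_one (hq : 2 ≤ q) (hadd : ∀ x y : K, (x+y)^q = x^q + y^q)
    (hcard : Fintype.card K = q ^ 2) {m : ℕ} {H : Matrix (Fin (m+1)) (Fin (m+1)) K}
    (hH : st q H = H) (hdet : IsUnit H.det) :
    ∃ u, fm q H u u = 1 := by
  -- first find u with fm H u u ≠ 0
  have hne : ∃ u, fm q H u u ≠ 0 := by
    by_contra hcon
    push_neg at hcon
    -- column 0 of H is nonzero
    have hcol : ∃ i, H i 0 ≠ 0 := by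
      by_contra hc
      push_neg at hc
      exact hdet.ne_zero (Matrix.det_eq_zero_of_column_eq_zero 0 hc)
    obtain ⟨i, hi⟩ := hcol
    set e : Fin (m+1) → K := (Pi.single (0 : Fin (m+1)) (1:K)) with he
    have hfe : ∀ u : Fin (m+1) → K, fm q H u e = ∑ k, u k * H k 0 := by
      intro u
      rw [fm]
      refine Finset.sum_congr rfl fun k _ => ?_
      rw [Finset.sum_eq_single 0]
      · simp [he, Pi.single_apply]
      · intro l _ hl
        simp [he, Pi.single_apply, hl, zero_pow (by omega : q ≠ 0)]
      · simp
    -- polarization: for all u, fm u e + fm e u = 0, and fm e u = (fm u e)^q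
    have hpol : ∀ u : Fin (m+1) → K, fm q H u e + (fm q H u e) ^ q = 0 := by
      intro u
      have h1 := hcon (u + e)
      rw [fm_add_left, fm_add_right hq hadd, fm_add_right hq hadd, hcon u, hcon e] at h1
      have h2 : fm q H e u = (fm q H u e) ^ q := (fm_symm hq hadd hcard hH e u).symm
      linear_combination h1 - h2
    -- now λ * H i 0 lands in the antifixed set for all λ
    have hinj : Function.Injective (fun lam : K => lam * H i 0) :=
      fun a b hab => mul_right_cancel₀ hi hab
    have hmem : ∀ lam : K, (lam * H i 0) + (lam * H i 0) ^ q = 0 := by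
      intro lam
      have := hpol (lam • (Pi.single i (1:K) : Fin (m+1) → K))
      rw [hfe] at this
      have hval : ∑ k, (lam • (Pi.single i (1:K) : Fin (m+1) → K)) k * H k 0 = lam * H i 0 := by
        rw [Finset.sum_eq_single i]
        · simp
        · intro l _ hl; simp [Pi.single_apply, hl]
        · simp
      rwa [hval] at this
    have hle : (Finset.univ : Finset K).card ≤
        (Finset.univ.filter fun x : K => x + x ^ q = 0).card := by
      refine Finset.card_le_card_of_injOn (fun lam => lam * H i 0) ?_ (hinj.injOn)
      intro lam _
      simp only [Finset.mem_coe, Finset.mem_filter, Finset.mem_univ, true_and]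
      exact hmem lam
    rw [Finset.card_univ, hcard] at hle
    have := card_antifixed_le hq (K := K)
    nlinarith
  obtain ⟨u₀, hu₀⟩ := hne
  have hfix : (fm q H u₀ u₀) ^ q = fm q H u₀ u₀ := fm_diag_fixed hq hadd hcard hH u₀
  obtain ⟨x₀, hx₀⟩ := norm_surj hq hcard _ hfix
  have hx0 : x₀ ≠ 0 := by rintro rfl; rw [zero_pow (by omega : q+1 ≠ 0)] at hx₀; exact hu₀ hx₀.symm
  refine ⟨x₀⁻¹ • u₀, ?_⟩
  rw [fm_smul, ← hx₀, inv_pow]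
  field_simp

/-- split off one orthonormal vector -/
lemma split_lemma (hq : 2 ≤ q) (hadd : ∀ x y : K, (x+y)^q = x^q + y^q)
    {m : ℕ} {H : Matrix (Fin (m+1)) (Fin (m+1)) K}
    (hcard : Fintype.card K = q ^ 2) (hH : st q H = H)
    {u : Fin (m+1) → K} (hu : fm q H u u = 1) :
    ∃ P : Matrix (Fin (m+1)) (Fin (m+1)) K, IsUnit P.det ∧ P 0 = u ∧
      P * H * st q P = bd ((P * H * st q P).submatrix Fin.succ Fin.succ) := by
  classical
  set z : Fin (m+1) → K := fun k => ∑ l, H k l * (u l) ^ q with hz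
  have hfmz : ∀ w : Fin (m+1) → K, fm q H w u = ∑ k, w k * z k := by
    intro w
    rw [fm]
    refine Finset.sum_congr rfl fun k _ => ?_
    rw [hz, Finset.mul_sum]
    exact Finset.sum_congr rfl fun l _ => by ring
  set f : (Fin (m+1) → K) →ₗ[K] K :=
    { toFun := fun w => ∑ k, w k * z k
      map_add' := fun a b => by simp [add_mul, Finset.sum_add_distrib]
      map_smul' := fun c a => by simp [Finset.mul_sum, mul_assoc] } with hf
  have hfu : f u = 1 := by rw [hf]; dsimp; rw [← hfmz u, hu]
  have hsurj : Function.Surjective f := by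
    intro c
    refine ⟨c • u, ?_⟩
    rw [LinearMap.map_smul, hfu, smul_eq_mul, mul_one]
  have hker : Module.finrank K (LinearMap.ker f) = m := by
    have h1 := LinearMap.finrank_range_add_finrank_ker f
    rw [LinearMap.range_eq_top.2 hsurj, finrank_top, Module.finrank_self,
      Module.finrank_fin_fun] at h1
    omega
  set b := Module.finBasisOfFinrankEq K (LinearMap.ker f) hker with hb
  set rows : Fin (m+1) → (Fin (m+1) → K) := Fin.cons u (fun i => (b i : Fin (m+1) → K)) with hrows
  have hli : LinearIndependent K rows := by
    rw [hrows]
    refine linearIndependent_fin_cons.2 ⟨?_, ?_⟩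
    · exact b.linearIndependent.map' (LinearMap.ker f).subtype (Submodule.ker_subtype _)
    · intro hmem
      have hsub : Submodule.span K (Set.range fun i => (b i : Fin (m+1) → K))
          ≤ LinearMap.ker f := by
        rw [Submodule.span_le]
        rintro x ⟨i, rfl⟩
        exact (b i).2
      have : f u = 0 := hsub hmem
      rw [hfu] at this
      exact one_ne_zero this
  set P := Matrix.of rows with hP
  have hPdet : IsUnit P.det := (Matrix.isUnit_iff_isUnit_det P).1
    (Matrix.linearIndependent_rows_iff_isUnit.1 hli)
  have hP0 : P 0 = u := rfl
  refine ⟨P, hPdet, hP0, ?_⟩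
  have hG00 : (P * H * st q P) 0 0 = 1 := by rw [gram_apply, hP0, hu]
  have hGs0 : ∀ i : Fin m, (P * H * st q P) i.succ 0 = 0 := by
    intro i
    rw [gram_apply, hP0]
    have : P i.succ = (b i : Fin (m+1) → K) := rfl
    rw [this, hfmz]
    exact (b i).2
  have hG0s : ∀ j : Fin m, (P * H * st q P) 0 j.succ = 0 := by
    intro j
    rw [gram_apply, hP0]
    have h1 : (fm q H (P j.succ) u) ^ q = fm q H u (P j.succ) :=
      fm_symm hq hadd hcard hH u (P j.succ)
    rw [← h1]
    have : P j.succ = (b j : Fin (m+1) → K) := rfl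
    rw [this, hfmz]
    have : ∑ k, (b j : Fin (m+1) → K) k * z k = 0 := (b j).2
    rw [this, zero_pow (by omega : q ≠ 0)]
  ext i j
  refine Fin.cases ?_ (fun i' => ?_) i <;> refine Fin.cases ?_ (fun j' => ?_) j
  · rw [hG00, bd_zero_zero]
  · rw [hG0s j', bd_zero_succ]
  · rw [hGs0 i', bd_succ_zero]
  · rw [bd_succ_succ]; rfl

/-- every invertible hermitian matrix is congruent to the identity -/
lemma herm_cong (hq : 2 ≤ q) (hadd : ∀ x y : K, (x+y)^q = x^q + y^q)
    (hcard : Fintype.card K = q ^ 2) :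
    ∀ (m : ℕ) (H : Matrix (Fin m) (Fin m) K), st q H = H → IsUnit H.det →
      ∃ P : Matrix (Fin m) (Fin m) K, IsUnit P.det ∧ P * H * st q P = 1 := by
  intro m
  induction m with
  | zero =>
    intro H _ _
    refine ⟨1, by simp, ?_⟩
    ext i j
    exact i.elim0
  | succ m ih =>
    intro H hH hdet
    obtain ⟨u, hu⟩ := fm_exists_one hq hadd hcard hH hdet
    obtain ⟨P₀, hP₀det, hP₀0, hGbd⟩ := split_lemma hq hadd hcard hH hu
    set G := P₀ * H * st q P₀ with hG
    set H' := G.submatrix Fin.succ Fin.succ with hH'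
    have hGherm : st q G = G := by
      rw [hG, st_mul hq hadd, st_mul hq hadd, st_st hcard, hH, Matrix.mul_assoc]
    have hH'herm : st q H' = H' := by
      have h1 : st q G = st q (bd H') := by rw [← hGbd]
      rw [hGbd] at hGherm
      rw [st_bd hq] at hGherm
      exact bd_inj hGherm
    have hGdet : IsUnit G.det := by
      rw [hG, Matrix.det_mul, Matrix.det_mul, st_det hq hadd]
      exact (hP₀det.mul hdet).mul (hP₀det.pow q)
    have hH'det : IsUnit H'.det := by
      rw [hGbd, bd_det] at hGdet
      exact hGdet
    obtain ⟨P', hP'det, hP'⟩ := ih H' hH'herm hH'det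
    refine ⟨bd P' * P₀, ?_, ?_⟩
    · rw [Matrix.det_mul, bd_det]
      exact hP'det.mul hP₀det
    · rw [st_mul hq hadd, st_bd hq]
      calc bd P' * P₀ * H * (st q P₀ * bd (st q P'))
          = bd P' * (P₀ * H * st q P₀) * bd (st q P') := by
            simp only [Matrix.mul_assoc]
      _ = bd P' * bd H' * bd (st q P') := by rw [← hG, hGbd]
      _ = 1 := by rw [bd_mul, bd_mul, hP', bd_one]

/-- every norm-one vector is the first row of a unitary matrix -/
lemma unitary_completion (hq : 2 ≤ q) (hadd : ∀ x y : K, (x+y)^q = x^q + y^q)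
    (hcard : Fintype.card K = q ^ 2) {m : ℕ} {v : Fin (m+1) → K}
    (hv : ∑ j, v j ^ (q+1) = 1) :
    ∃ B : Matrix (Fin (m+1)) (Fin (m+1)) K, B * st q B = 1 ∧ B 0 = v := by
  have hfm1 : fm q (1 : Matrix (Fin (m+1)) (Fin (m+1)) K) v v = 1 := by
    rw [fm, ← hv]
    refine Finset.sum_congr rfl fun k _ => ?_
    rw [Finset.sum_eq_single k]
    · rw [Matrix.one_apply_eq, pow_succ']
      ring
    · intro l _ hl
      rw [Matrix.one_apply_ne (fun h => hl h.symm)]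
      ring
    · simp
  obtain ⟨P₀, hP₀det, hP₀0, hGbd⟩ := split_lemma hq hadd hcard (st_one hq) hfm1
  rw [Matrix.mul_one] at hGbd
  set H' := (P₀ * st q P₀).submatrix Fin.succ Fin.succ with hH'
  have hGherm : st q (P₀ * st q P₀) = P₀ * st q P₀ := by
    rw [st_mul hq hadd, st_st hcard]
  have hH'herm : st q H' = H' := by
    rw [hGbd, st_bd hq] at hGherm
    exact bd_inj hGherm
  have hGdet : IsUnit (P₀ * st q P₀).det := by
    rw [Matrix.det_mul, st_det hq hadd]
    exact hP₀det.mul (hP₀det.pow q)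
  have hH'det : IsUnit H'.det := by
    rw [hGbd, bd_det] at hGdet
    exact hGdet
  obtain ⟨P', hP'det, hP'⟩ := herm_cong hq hadd hcard m H' hH'herm hH'det
  refine ⟨bd P' * P₀, ?_, ?_⟩
  · rw [st_mul hq hadd, st_bd hq]
    calc bd P' * P₀ * (st q P₀ * bd (st q P'))
        = bd P' * (P₀ * st q P₀) * bd (st q P') := by
          simp only [Matrix.mul_assoc]
    _ = bd P' * bd H' * bd (st q P') := by rw [hGbd]
    _ = 1 := by rw [bd_mul, bd_mul, hP', bd_one]
  · rw [bd_mul_row_zero, hP₀0]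

end MatrixPart2

section Count
variable {K : Type*} [Field K] [Fintype K] [DecidableEq K] {q : ℕ}





/-- cardinality of the unitary group -/
def Ucard (q : ℕ) (K : Type*) [Field K] [Fintype K] [DecidableEq K] (m : ℕ) : ℕ :=
  (Finset.univ.filter fun M : Matrix (Fin m) (Fin m) K => M * st q M = 1).card

lemma matrix_fin_zero_eq (A B : Matrix (Fin 0) (Fin 0) K) : A = B := by
  ext i j; exact i.elim0

lemma Ucard_zero : Ucard q K 0 = 1 := by
  rw [Ucard, Finset.card_eq_one]
  refine ⟨1, ?_⟩
  rw [Finset.eq_singleton_iff_unique_mem]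
  constructor
  · simp only [Finset.mem_filter, Finset.mem_univ, true_and]
    exact matrix_fin_zero_eq _ _
  · intro M _
    exact matrix_fin_zero_eq _ _

lemma row_sphere {m : ℕ} {M : Matrix (Fin (m+1)) (Fin (m+1)) K}
    (h : M * st q M = 1) : ∑ j, (M 0 j) ^ (q+1) = 1 := by
  have h00 := congrFun (congrFun h 0) 0
  rw [Matrix.mul_apply, Matrix.one_apply_eq] at h00
  rw [← h00]
  refine Finset.sum_congr rfl fun k _ => ?_
  rw [st_apply, pow_succ']

lemma unit_shape (hq : 2 ≤ q) {m : ℕ}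
    {N : Matrix (Fin (m+1)) (Fin (m+1)) K} (hN1 : N * st q N = 1)
    (hN0 : ∀ j, N 0 j = (1 : Matrix (Fin (m+1)) (Fin (m+1)) K) 0 j) :
    N = bd (N.submatrix Fin.succ Fin.succ) := by
  have hq0 : q ≠ 0 := by omega
  have hcol : ∀ i' : Fin m, N i'.succ 0 = 0 := by
    intro i'
    have h1 := congrFun (congrFun hN1 i'.succ) 0
    rw [Matrix.mul_apply, Matrix.one_apply_ne (Fin.succ_ne_zero i')] at h1
    rw [← h1, Finset.sum_eq_single 0]
    · rw [st_apply, hN0 0, Matrix.one_apply_eq, one_pow, mul_one]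
    · intro k _ hk
      rw [st_apply, hN0 k, Matrix.one_apply_ne (fun h => hk h.symm), zero_pow hq0, mul_zero]
    · simp
  ext i j
  refine Fin.cases ?_ (fun i' => ?_) i <;> refine Fin.cases ?_ (fun j' => ?_) j
  · rw [bd_zero_zero, hN0 0, Matrix.one_apply_eq]
  · rw [bd_zero_succ, hN0 j'.succ, Matrix.one_apply_ne (Fin.succ_ne_zero j').symm]
  · rw [bd_succ_zero, hcol i']
  · rw [bd_succ_succ, Matrix.submatrix_apply]

lemma fiber_card (hq : 2 ≤ q) (hadd : ∀ x y : K, (x+y)^q = x^q + y^q)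
    (hcard : Fintype.card K = q ^ 2) {m : ℕ} {v : Fin (m+1) → K}
    (hv : ∑ j, v j ^ (q+1) = 1) :
    (Finset.univ.filter fun M : Matrix (Fin (m+1)) (Fin (m+1)) K =>
        M * st q M = 1 ∧ M 0 = v).card = Ucard q K m := by
  obtain ⟨B, hB1, hB0⟩ := unitary_completion hq hadd hcard hv
  have hB1' : st q B * B = 1 := mul_eq_one_comm.1 hB1
  rw [Ucard]
  refine Finset.card_nbij' (fun M => (M * st q B).submatrix Fin.succ Fin.succ)
    (fun A => bd A * B) ?_ ?_ ?_ ?_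
  · intro M hM
    simp only [Finset.mem_coe, Finset.mem_filter, Finset.mem_univ, true_and] at *
    obtain ⟨hM1, hM0⟩ := hM
    set N := M * st q B with hN
    have hN1 : N * st q N = 1 := by
      rw [hN, st_mul hq hadd, st_st hcard]
      calc M * st q B * (B * st q M) = M * (st q B * B) * st q M := by
            simp only [Matrix.mul_assoc]
      _ = 1 := by rw [hB1', Matrix.mul_one, hM1]
    have hN0 : ∀ j, N 0 j = (1 : Matrix (Fin (m+1)) (Fin (m+1)) K) 0 j := by
      intro j
      have : N 0 j = ∑ k, M 0 k * st q B k j := by rw [hN, Matrix.mul_apply]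
      rw [this, ← hB1]
      rw [Matrix.mul_apply]
      refine Finset.sum_congr rfl fun k _ => ?_
      rw [hM0, hB0]
    -- now N = bd A with A unitary
    have hshape := unit_shape hq hN1 hN0
    set A := N.submatrix Fin.succ Fin.succ with hA
    have : bd A * st q (bd A) = 1 := by rw [← hshape]; exact hN1
    rw [st_bd hq, bd_mul] at this
    have h1 : bd (A * st q A) = bd (1 : Matrix (Fin m) (Fin m) K) := by rw [this, bd_one]
    exact bd_inj h1
  · intro A hA
    simp only [Finset.mem_coe, Finset.mem_filter, Finset.mem_univ, true_and] at *
    constructor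
    · rw [st_mul hq hadd, st_bd hq]
      calc bd A * B * (st q B * bd (st q A)) = bd A * (B * st q B) * bd (st q A) := by
            simp only [Matrix.mul_assoc]
      _ = 1 := by rw [hB1, Matrix.mul_one, bd_mul, hA, bd_one]
    · rw [bd_mul_row_zero, hB0]
  · intro M hM
    simp only [Finset.mem_coe, Finset.mem_filter, Finset.mem_univ, true_and] at hM
    obtain ⟨hM1, hM0⟩ := hM
    set N := M * st q B with hN
    have hN1 : N * st q N = 1 := by
      rw [hN, st_mul hq hadd, st_st hcard]
      calc M * st q B * (B * st q M) = M * (st q B * B) * st q M := by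
            simp only [Matrix.mul_assoc]
      _ = 1 := by rw [hB1', Matrix.mul_one, hM1]
    have hN0 : ∀ j, N 0 j = (1 : Matrix (Fin (m+1)) (Fin (m+1)) K) 0 j := by
      intro j
      have : N 0 j = ∑ k, M 0 k * st q B k j := by rw [hN, Matrix.mul_apply]
      rw [this, ← hB1]
      rw [Matrix.mul_apply]
      refine Finset.sum_congr rfl fun k _ => ?_
      rw [hM0, hB0]
    have hshape := unit_shape hq hN1 hN0
    calc bd ((M * st q B).submatrix Fin.succ Fin.succ) * B = N * B := by rw [← hshape]
    _ = M * (st q B * B) := by rw [hN]; simp only [Matrix.mul_assoc]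
    _ = M := by rw [hB1', Matrix.mul_one]
  · intro A hA
    simp only [Finset.mem_coe, Finset.mem_filter, Finset.mem_univ, true_and] at hA
    have h2 : bd A * B * st q B = bd A := by
      rw [Matrix.mul_assoc, hB1, Matrix.mul_one]
    show (bd A * B * st q B).submatrix Fin.succ Fin.succ = A
    rw [h2]
    ext i j
    rw [Matrix.submatrix_apply, bd_succ_succ]

lemma Ucard_succ (hq : 2 ≤ q) (hadd : ∀ x y : K, (x+y)^q = x^q + y^q)
    (hcard : Fintype.card K = q ^ 2) (m : ℕ) :
    Ucard q K (m+1) = Sc q (m+1) (1:K) * Ucard q K m := by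
  rw [Ucard, Finset.card_eq_sum_card_fiberwise
    (f := fun M : Matrix (Fin (m+1)) (Fin (m+1)) K => M 0)
    (t := Finset.univ.filter fun v : Fin (m+1) → K => ∑ j, v j ^ (q+1) = 1) ?_]
  · rw [Finset.sum_congr rfl (fun v hv => ?_), Finset.sum_const, smul_eq_mul, ← Sc]
    simp only [Finset.mem_filter, Finset.mem_univ, true_and] at hv
    rw [Finset.filter_filter]
    exact fiber_card hq hadd hcard hv
  · intro M hM
    simp only [Finset.mem_coe, Finset.mem_filter, Finset.mem_univ, true_and] at *
    exact row_sphere hM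

lemma Ucard_closed (hq : 2 ≤ q) (hadd : ∀ x y : K, (x+y)^q = x^q + y^q)
    (hcard : Fintype.card K = q ^ 2) (n : ℕ) :
    (Ucard q K n : ℤ) = ∏ i ∈ Finset.range n, ((q:ℤ)^i * ((q:ℤ)^(i+1) - (-1)^(i+1))) := by
  induction n with
  | zero => rw [Ucard_zero]; simp
  | succ n ih =>
    rw [Ucard_succ hq hadd hcard, Finset.prod_range_succ, ← ih]
    push_cast
    rw [(Sc_closed hq hcard hadd n).1]
    ring

end Count



end UnitaryGroupCard

open UnitaryGroupCard Matrix Finset in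
/-- **Order of the finite unitary group.**
Let `q` be a prime power and `n ≥ 1`. Let `K` be a finite field with `q ^ 2` elements,
and let `σ : x ↦ x ^ q` be the nontrivial automorphism of `K` over its subfield with `q`
elements. The finite unitary group `U_n(F_q)` of matrices `M` with `M ⬝ (σ M)ᵀ = 1` has
order `q ^ (n(n-1)/2) * ∏_{i=1}^{n} (q ^ i - (-1) ^ i)`. -/
theorem unitary_group_card (q n : ℕ) (hq : IsPrimePow q) (hn : 1 ≤ n)
    (K : Type*) [Field K] [Fintype K] (hK : Fintype.card K = q ^ 2) :
    (Nat.card {M : Matrix (Fin n) (Fin n) K //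
        M * (M.map fun x => x ^ q).transpose = 1} : ℤ) =
      (q : ℤ) ^ (n * (n - 1) / 2) * ∏ i ∈ Finset.Icc 1 n, ((q : ℤ) ^ i - (-1) ^ i) := by
  classical
  obtain ⟨p, k, hp, hk, hpk⟩ := hq
  have hp' : Nat.Prime p := Nat.prime_iff.2 hp
  have hq2 : 2 ≤ q := by
    rw [← hpk]
    calc 2 ≤ p := hp'.two_le
    _ ≤ p ^ k := Nat.le_self_pow (by omega) p
  -- the characteristic of K is p
  have hcharP : CharP K p := by
    have h1 : CharP K (ringChar K) := ringChar.charP K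
    obtain ⟨m, hm, hcardm⟩ := FiniteField.card K (ringChar K)
    have hdvd : p ∣ ringChar K := by
      have h2 : p ∣ Fintype.card K := by
        rw [hK, ← hpk, ← pow_mul]
        exact dvd_pow_self p (by omega : k * 2 ≠ 0)
      rw [hcardm] at h2
      exact Nat.Prime.dvd_of_dvd_pow hp' h2
    have : p = ringChar K := ((Nat.prime_dvd_prime_iff_eq hp' hm).1 hdvd)
    rwa [this]
  haveI := Fact.mk hp'
  haveI := hcharP
  have hadd : ∀ x y : K, (x+y)^q = x^q + y^q := by
    intro x y
    rw [← hpk]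
    exact add_pow_char_pow x y p k
  -- identify Nat.card with Ucard
  have hcard1 : (Nat.card {M : Matrix (Fin n) (Fin n) K //
      M * (M.map fun x => x ^ q).transpose = 1}) = Ucard q K n := by
    rw [Nat.card_eq_fintype_card, Ucard]
    have hpred : (fun M : Matrix (Fin n) (Fin n) K =>
        M * (M.map fun x => x ^ q).transpose = 1) = (fun M => M * st q M = 1) := rfl
    rw [Fintype.card_subtype]
    congr 1
  rw [hcard1, Ucard_closed hq2 hadd hK n]
  rw [Finset.prod_mul_distrib, Finset.prod_pow_eq_pow_sum, Finset.sum_range_id]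
  congr 1
  refine Finset.prod_bij' (fun (i : ℕ) _ => i + 1) (fun (j : ℕ) _ => j - 1) ?_ ?_ ?_ ?_ ?_
  · intro a ha; simp only [Finset.mem_range] at ha; simp only [Finset.mem_Icc]; omega
  · intro a ha; simp only [Finset.mem_Icc] at ha; simp only [Finset.mem_range]; omega
  · intro a ha; omega
  · intro a ha; simp only [Finset.mem_Icc] at ha; omega
  · intro a ha; rfl
end

section
/- Let 𝔽 be a finite field with q elements and n ≥ 1. Then the symplectic group Sp_{2n}(𝔽) has order q^{n²} · ∏_{i=1}^{n} (q^{2i} − 1). (This is the instance of the order formula |G(F_q)| = q^N ∏_{i=1}^{l}(q^{d_i}−1) for the split group of type C_n, whose exponents are d_i = 2, 4, …, 2n and whose number of positive roots is N = n².) -/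
open Matrix Finset LinearMap

universe v

section Helpers

variable {𝔽 : Type v} [Field 𝔽]

/-- The standard symplectic matrix. -/
def Jm (m : ℕ) : Matrix (Fin m ⊕ Fin m) (Fin m ⊕ Fin m) 𝔽 := fromBlocks 0 1 (-1) 0

@[simp] lemma Jm_inl_inl (m : ℕ) (i j : Fin m) : Jm (𝔽 := 𝔽) m (.inl i) (.inl j) = 0 := rfl

@[simp] lemma Jm_inr_inr (m : ℕ) (i j : Fin m) : Jm (𝔽 := 𝔽) m (.inr i) (.inr j) = 0 := rfl

@[simp] lemma Jm_inl_inr (m : ℕ) (i j : Fin m) :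
    Jm (𝔽 := 𝔽) m (.inl i) (.inr j) = if i = j then 1 else 0 := by
  simp [Jm, Matrix.one_apply]

@[simp] lemma Jm_inr_inl (m : ℕ) (i j : Fin m) :
    Jm (𝔽 := 𝔽) m (.inr i) (.inl j) = if i = j then -1 else 0 := by
  simp only [Jm, fromBlocks_apply₂₁, Matrix.neg_apply, Matrix.one_apply]
  split <;> simp

variable {V : Type*}

/-- Reconstruct a `2(m+1)`-tuple from two vectors and a `2m`-tuple. -/
def recon (a b : V) (g : (Fin m ⊕ Fin m) → V) : (Fin (m+1) ⊕ Fin (m+1)) → V :=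
  Sum.elim (Fin.cases a fun j => g (.inl j)) (Fin.cases b fun j => g (.inr j))

@[simp] lemma recon_inl_zero (a b : V) (g : (Fin m ⊕ Fin m) → V) :
    recon a b g (.inl 0) = a := rfl

@[simp] lemma recon_inr_zero (a b : V) (g : (Fin m ⊕ Fin m) → V) :
    recon a b g (.inr 0) = b := rfl

@[simp] lemma recon_inl_succ (a b : V) (g : (Fin m ⊕ Fin m) → V) (j : Fin m) :
    recon a b g (.inl j.succ) = g (.inl j) := by simp [recon]

@[simp] lemma recon_inr_succ (a b : V) (g : (Fin m ⊕ Fin m) → V) (j : Fin m) :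
    recon a b g (.inr j.succ) = g (.inr j) := by simp [recon]

/-- Shift a `2(m+1)`-index tuple down to a `2m`-index tuple. -/
def shrink (f : (Fin (m+1) ⊕ Fin (m+1)) → V) : (Fin m ⊕ Fin m) → V :=
  fun i => f (Sum.map Fin.succ Fin.succ i)

@[simp] lemma shrink_inl (f : (Fin (m+1) ⊕ Fin (m+1)) → V) (j : Fin m) :
    shrink f (.inl j) = f (.inl j.succ) := rfl

@[simp] lemma shrink_inr (f : (Fin (m+1) ⊕ Fin (m+1)) → V) (j : Fin m) :
    shrink f (.inr j) = f (.inr j.succ) := rfl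

end Helpers

set_option maxHeartbeats 1000000 in
theorem sp_count {𝔽 : Type v} [Field 𝔽] [Fintype 𝔽] (q : ℕ) (hq : Fintype.card 𝔽 = q) :
    ∀ (m : ℕ) (V : Type v) [AddCommGroup V] [Module 𝔽 V] [FiniteDimensional 𝔽 V]
      (B : V →ₗ[𝔽] V →ₗ[𝔽] 𝔽), (∀ u, B u u = 0) → (∀ u, (∀ w, B u w = 0) → u = 0) →
      Module.finrank 𝔽 V = 2 * m →
      (Nat.card {f : (Fin m ⊕ Fin m) → V // ∀ i j, B (f i) (f j) = Jm m i j} : ℤ)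
        = ∏ i ∈ Icc 1 m, (((q:ℤ) ^ (2*i) - 1) * (q:ℤ) ^ (2*i - 1)) := by
  intro m
  induction m with
  | zero =>
    intro V _ _ _ B halt hnd hdim
    haveI : Unique {f : (Fin 0 ⊕ Fin 0) → V // ∀ i j, B (f i) (f j) = Jm 0 i j} :=
      { default := ⟨fun i => isEmptyElim i, fun i j => isEmptyElim i⟩
        uniq := fun f => Subtype.ext (funext fun i => isEmptyElim i) }
    simp [Nat.card_unique]
  | succ m ih =>
    intro V _ _ _ B halt hnd hdim
    classical
    have hms : 1 ≤ m + 1 := by omega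
    have h21 : 2*(m+1)-1 = 2*m+1 := by omega
    haveI : Finite V := Module.finite_of_finite 𝔽
    haveI : Fintype V := Fintype.ofFinite V
    have hskew : ∀ x y : V, B y x = - B x y := by
      intro x y
      have h := halt (x + y)
      simp only [map_add, LinearMap.add_apply, halt] at h
      linear_combination h
    have hcardV : Fintype.card V = q ^ (2*(m+1)) := by
      rw [Module.card_eq_pow_finrank (K := 𝔽), hq, hdim]
    have hsurj : ∀ a : V, a ≠ 0 → Function.Surjective (B a) := by
      intro a ha s
      obtain ⟨w, hw⟩ : ∃ w, B a w ≠ 0 := by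
        by_contra h; push_neg at h; exact ha (hnd a h)
      refine ⟨(s * (B a w)⁻¹) • w, ?_⟩
      simp only [_root_.map_smul, smul_eq_mul]
      field_simp
    have hcount_b : ∀ a : V, a ≠ 0 →
        ((univ.filter (fun b => B a b = 1)).card = q ^ (2*m+1)) := by
      intro a ha
      have hr : Module.finrank 𝔽 (LinearMap.range (B a)) = 1 := by
        rw [LinearMap.range_eq_top.mpr (hsurj a ha), finrank_top, Module.finrank_self]
      have hk : Module.finrank 𝔽 (LinearMap.ker (B a)) = 2*m+1 := by
        have h2 := LinearMap.finrank_range_add_finrank_ker (B a)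
        rw [hr, hdim] at h2; omega
      obtain ⟨b₀, hb₀⟩ := hsurj a ha 1
      have e : {b : V // B a b = 1} ≃ LinearMap.ker (B a) :=
        { toFun := fun x => ⟨x.1 - b₀, by
            simp [LinearMap.mem_ker, map_sub, x.2, hb₀]⟩
          invFun := fun y => ⟨y.1 + b₀, by
            have hy := y.2
            simp only [LinearMap.mem_ker] at hy
            simp [map_add, hy, hb₀]⟩
          left_inv := fun x => Subtype.ext (by simp)
          right_inv := fun y => Subtype.ext (by simp) }
      rw [← Fintype.card_subtype, Fintype.card_congr e,
        Module.card_eq_pow_finrank (K := 𝔽), hq, hk]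
    set C : ℤ := ∏ i ∈ Icc 1 m, (((q:ℤ)^(2*i) - 1) * (q:ℤ)^(2*i-1)) with hC
    -- the fiber count
    have key : ∀ a b : V,
        (Fintype.card {f : (Fin (m+1) ⊕ Fin (m+1)) → V //
          (∀ i j, B (f i) (f j) = Jm (m+1) i j) ∧ f (.inl 0) = a ∧ f (.inr 0) = b} : ℤ)
        = if B a b = 1 then C else 0 := by
      intro a b
      by_cases hab : B a b = 1
      · rw [if_pos hab]
        have hba : B b a = -1 := by rw [hskew a b, hab]
        set W : Submodule 𝔽 V := LinearMap.ker (B a) ⊓ LinearMap.ker (B b) with hW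
        have hmemW : ∀ x : V, x ∈ W ↔ B a x = 0 ∧ B b x = 0 := by
          intro x; simp [hW, Submodule.mem_inf, LinearMap.mem_ker]
        set B' : W →ₗ[𝔽] W →ₗ[𝔽] 𝔽 := B.domRestrict₁₂ W W with hB'
        have halt' : ∀ u : W, B' u u = 0 := fun u => halt u.1
        have hnd' : ∀ u : W, (∀ w : W, B' u w = 0) → u = 0 := by
          intro u hu
          have hua : B a u.1 = 0 ∧ B b u.1 = 0 := (hmemW _).1 u.2
          have h1 : B u.1 a = 0 := by rw [hskew a u.1, hua.1, neg_zero]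
          have h2 : B u.1 b = 0 := by rw [hskew b u.1, hua.2, neg_zero]
          refine Subtype.ext (hnd u.1 fun x => ?_)
          have hy : (x + B b x • a - B a x • b) ∈ W := by
            rw [hmemW]
            constructor
            · simp only [map_add, map_sub, _root_.map_smul, smul_eq_mul, halt, hab]
              ring
            · simp only [map_add, map_sub, _root_.map_smul, smul_eq_mul, halt, hba]
              ring
          have h0 : B u.1 (x + B b x • a - B a x • b) = 0 := hu ⟨_, hy⟩
          simp only [map_add, map_sub, _root_.map_smul, smul_eq_mul, h1, h2] at h0
          linear_combination h0
        have hdim' : Module.finrank 𝔽 W = 2 * m := by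
          have hkerφ : LinearMap.ker ((B a).prod (B b)) = W := LinearMap.ker_prod _ _
          have hsurjφ : Function.Surjective ((B a).prod (B b)) := by
            rintro ⟨s, t⟩
            refine ⟨s • b - t • a, ?_⟩
            have h3 : (B a).prod (B b) (s • b - t • a)
                = (B a (s • b - t • a), B b (s • b - t • a)) := rfl
            rw [h3]
            simp only [map_sub, _root_.map_smul, smul_eq_mul, hab, hba, halt]
            norm_num
          have hrφ : Module.finrank 𝔽 (LinearMap.range ((B a).prod (B b))) = 2 := by
            rw [LinearMap.range_eq_top.mpr hsurjφ, finrank_top]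
            simp [Module.finrank_prod]
          have h2 := LinearMap.finrank_range_add_finrank_ker ((B a).prod (B b))
          rw [hrφ, hkerφ, hdim] at h2
          omega
        have hT := ih W B' halt' hnd' hdim'
        -- forward direction facts
        have fwd_mem : ∀ (f : (Fin (m+1) ⊕ Fin (m+1)) → V),
            (∀ i j, B (f i) (f j) = Jm (m+1) i j) → f (.inl 0) = a → f (.inr 0) = b →
            ∀ i, shrink f i ∈ W := by
          intro f hf h1 h2 i
          rw [hmemW, ← h1, ← h2]
          rcases i with i | i <;>
            constructor <;>
              simp [hf, (Fin.succ_ne_zero i).symm]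
        have fwd_gram : ∀ (f : (Fin (m+1) ⊕ Fin (m+1)) → V),
            (∀ i j, B (f i) (f j) = Jm (m+1) i j) →
            ∀ i j, B (shrink f i) (shrink f j) = Jm m i j := by
          intro f hf i j
          rcases i with i | i <;> rcases j with j | j <;>
            simp [hf, Fin.succ_inj]
        -- backward direction fact
        have bwd_gram : ∀ (g : (Fin m ⊕ Fin m) → W),
            (∀ i j, B (g i).1 (g j).1 = Jm m i j) →
            ∀ i j, B (recon a b (fun i => (g i).1) i) (recon a b (fun i => (g i).1) j)
              = Jm (m+1) i j := by
          intro g hg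
          have hWa : ∀ i, B a ((g i).1) = 0 := fun i => ((hmemW _).1 (g i).2).1
          have hWb : ∀ i, B b ((g i).1) = 0 := fun i => ((hmemW _).1 (g i).2).2
          have hWa' : ∀ i, B ((g i).1) a = 0 := fun i => by
            rw [hskew a _, hWa, neg_zero]
          have hWb' : ∀ i, B ((g i).1) b = 0 := fun i => by
            rw [hskew b _, hWb, neg_zero]
          have hzs : ∀ (k : Fin m), ((0:Fin (m+1)) = k.succ) = False :=
            fun k => eq_false (Ne.symm (Fin.succ_ne_zero k))
          intro i j
          rcases i with i | i <;> rcases j with j | j <;>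
            induction i using Fin.cases <;> induction j using Fin.cases <;>
              simp [halt, hab, hba, hWa, hWb, hWa', hWb', hg, hzs,
                Fin.succ_inj, Fin.succ_ne_zero]
        have hE : {f : (Fin (m+1) ⊕ Fin (m+1)) → V //
              (∀ i j, B (f i) (f j) = Jm (m+1) i j) ∧ f (.inl 0) = a ∧ f (.inr 0) = b}
            ≃ {g : (Fin m ⊕ Fin m) → W // ∀ i j, B' (g i) (g j) = Jm m i j} :=
          { toFun := fun x =>
              ⟨fun i => ⟨shrink x.1 i, fwd_mem x.1 x.2.1 x.2.2.1 x.2.2.2 i⟩,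
                fun i j => fwd_gram x.1 x.2.1 i j⟩
            invFun := fun g =>
              ⟨recon a b (fun i => (g.1 i).1),
                bwd_gram (fun i => g.1 i) g.2, by simp, by simp⟩
            left_inv := by
              rintro ⟨f, hf, h1, h2⟩
              refine Subtype.ext (funext fun i => ?_)
              rcases i with k | k <;> induction k using Fin.cases <;>
                simp [h1, h2]
            right_inv := by
              rintro ⟨g, hg⟩
              refine Subtype.ext (funext fun i => Subtype.ext ?_)
              rcases i with k | k <;> simp }
        rw [← Nat.card_eq_fintype_card, Nat.card_congr hE, hT]
      · rw [if_neg hab]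
        have : IsEmpty {f : (Fin (m+1) ⊕ Fin (m+1)) → V //
            (∀ i j, B (f i) (f j) = Jm (m+1) i j) ∧ f (.inl 0) = a ∧ f (.inr 0) = b} := by
          refine ⟨?_⟩
          rintro ⟨f, hf, h1, h2⟩
          apply hab
          rw [← h1, ← h2, hf]
          simp
        rw [Fintype.card_eq_zero]
        exact Int.natCast_zero
    have E : {f : (Fin (m+1) ⊕ Fin (m+1)) → V // ∀ i j, B (f i) (f j) = Jm (m+1) i j}
        ≃ Σ p : V × V, {f : (Fin (m+1) ⊕ Fin (m+1)) → V //
            (∀ i j, B (f i) (f j) = Jm (m+1) i j) ∧ f (.inl 0) = p.1 ∧ f (.inr 0) = p.2} :=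
      { toFun := fun f => ⟨(f.1 (.inl 0), f.1 (.inr 0)), f.1, f.2, rfl, rfl⟩
        invFun := fun x => ⟨x.2.1, x.2.2.1⟩
        left_inv := fun f => rfl
        right_inv := by
          rintro ⟨⟨a, b⟩, f, hf, h1, h2⟩
          dsimp only at h1 h2
          subst h1; subst h2; rfl }
    rw [Nat.card_congr E, Nat.card_eq_fintype_card, Fintype.card_sigma, Nat.cast_sum,
      Fintype.sum_prod_type]
    have step1 : (∑ a : V, ∑ b : V, ((Fintype.card {f : (Fin (m+1) ⊕ Fin (m+1)) → V //
            (∀ i j, B (f i) (f j) = Jm (m+1) i j) ∧ f (.inl 0) = (a, b).1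
              ∧ f (.inr 0) = (a, b).2} : ℕ) : ℤ))
        = ∑ a : V, ∑ b : V, (if B a b = 1 then C else 0) :=
      Finset.sum_congr rfl fun a _ => Finset.sum_congr rfl fun b _ => key a b
    rw [step1]
    have inner : ∀ a : V, (∑ b : V, if B a b = 1 then C else 0)
        = if a = 0 then 0 else (q:ℤ)^(2*m+1) * C := by
      intro a
      by_cases ha : a = 0
      · rw [if_pos ha]
        subst ha
        have hz : ∀ b : V, B (0 : V) b = 0 := fun b => by simp
        simp [hz]
      · rw [if_neg ha, ← Finset.sum_filter, Finset.sum_const, hcount_b a ha,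
          nsmul_eq_mul]
        push_cast
        ring
    rw [Finset.sum_congr rfl fun a _ => inner a]
    have hsplit : ∀ a : V, (if a = 0 then (0:ℤ) else (q:ℤ)^(2*m+1) * C)
        = (q:ℤ)^(2*m+1) * C - (if a = 0 then (q:ℤ)^(2*m+1) * C else 0) := by
      intro a; split_ifs <;> ring
    rw [Finset.sum_congr rfl fun a _ => hsplit a]
    rw [Finset.sum_sub_distrib, Finset.sum_const, Finset.card_univ,
      Finset.sum_ite_eq' univ (0 : V) (fun _ => (q:ℤ)^(2*m+1) * C)]
    rw [if_pos (Finset.mem_univ (0:V)), hcardV, nsmul_eq_mul]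
    have hprod : ∏ i ∈ Icc 1 (m+1), (((q:ℤ)^(2*i) - 1) * (q:ℤ)^(2*i-1))
        = C * (((q:ℤ)^(2*(m+1)) - 1) * (q:ℤ)^(2*m+1)) := by
      rw [Finset.prod_Icc_succ_top hms, ← hC, h21]
    rw [hprod]
    push_cast
    ring

section Glue

variable {𝔽 : Type v} [Field 𝔽]

/-- The standard symplectic bilinear form on `(Fin n ⊕ Fin n) → 𝔽`. -/
def Bf (n : ℕ) : ((Fin n ⊕ Fin n) → 𝔽) →ₗ[𝔽] ((Fin n ⊕ Fin n) → 𝔽) →ₗ[𝔽] 𝔽 :=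
  LinearMap.mk₂ 𝔽 (fun x y => x ⬝ᵥ (Jm n) *ᵥ y)
    (fun x x' y => by simp [add_dotProduct])
    (fun c x y => by simp [smul_dotProduct])
    (fun x y y' => by simp [Matrix.mulVec_add, dotProduct_add])
    (fun c x y => by simp [Matrix.mulVec_smul, dotProduct_smul])

lemma Bf_apply (n : ℕ) (x y : (Fin n ⊕ Fin n) → 𝔽) :
    Bf n x y = x ⬝ᵥ (Jm n) *ᵥ y := rfl

lemma Jm_mulVec_inl (n : ℕ) (v : (Fin n ⊕ Fin n) → 𝔽) (i : Fin n) :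
    (Jm n *ᵥ v) (.inl i) = v (.inr i) := by
  simp [Matrix.mulVec, dotProduct, Fintype.sum_sum_type, ite_mul]

lemma Jm_mulVec_inr (n : ℕ) (v : (Fin n ⊕ Fin n) → 𝔽) (i : Fin n) :
    (Jm n *ᵥ v) (.inr i) = -v (.inl i) := by
  simp [Matrix.mulVec, dotProduct, Fintype.sum_sum_type, ite_mul]

lemma Bf_alt (n : ℕ) (v : (Fin n ⊕ Fin n) → 𝔽) : Bf n v v = 0 := by
  rw [Bf_apply]
  unfold dotProduct
  rw [Fintype.sum_sum_type]
  simp [Jm_mulVec_inl, Jm_mulVec_inr, mul_comm]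

lemma Jm_mul_Jm (n : ℕ) : Jm (𝔽 := 𝔽) n * Jm n = -1 := by
  have h : -(1 : Matrix (Fin n ⊕ Fin n) (Fin n ⊕ Fin n) 𝔽)
      = fromBlocks (-1) 0 0 (-1) := by
    rw [← Matrix.fromBlocks_one, Matrix.fromBlocks_neg]
    simp
  rw [h, Jm, Matrix.fromBlocks_multiply]
  simp

lemma Bf_nondeg (n : ℕ) (v : (Fin n ⊕ Fin n) → 𝔽) (hv : ∀ w, Bf n v w = 0) :
    v = 0 := by
  have hvJ : v ᵥ* Jm n = 0 := by
    funext l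
    have := hv (Pi.single l 1)
    rw [Bf_apply, Matrix.dotProduct_mulVec] at this
    simpa [dotProduct, Pi.single_apply, mul_ite] using this
  have h2 : v ᵥ* (Jm n * Jm n) = 0 := by
    rw [← Matrix.vecMul_vecMul, hvJ, Matrix.zero_vecMul]
  rw [Jm_mul_Jm] at h2
  have h3 : -v = 0 := by
    simpa [Matrix.vecMul_neg, Matrix.vecMul_one] using h2
  simpa [neg_eq_zero] using h3

lemma finrank_pi_sum (n : ℕ) :
    Module.finrank 𝔽 ((Fin n ⊕ Fin n) → 𝔽) = 2 * n := by
  rw [Module.finrank_pi]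
  simp
  omega

end Glue

lemma sum_odd_sq (n : ℕ) : ∑ i ∈ Icc 1 n, (2*i - 1) = n^2 := by
  induction n with
  | zero => simp
  | succ n ih =>
    rw [Finset.sum_Icc_succ_top (by omega : 1 ≤ n + 1), ih]
    have h : (n+1)^2 = n^2 + (2*n+1) := by ring
    omega

/-- **Order of the symplectic group.**
Let `𝔽` be a finite field with `q` elements and `n ≥ 1`. The symplectic group
`Sp_{2n}(𝔽)` of `2n × 2n` matrices `M` with `M * J * Mᵀ = J`, where
`J = [[0, I_n], [-I_n, 0]]`, has order `q ^ (n ^ 2) * ∏_{i=1}^{n} (q ^ (2 i) - 1)`.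
(This is the order formula `q ^ N * ∏ (q ^ dᵢ - 1)` for the split group of type `Cₙ`,
with exponents `dᵢ = 2, 4, …, 2n` and `N = n ^ 2` positive roots.) -/
theorem symplectic_group_card (q n : ℕ) (hn : 1 ≤ n)
    (𝔽 : Type*) [Field 𝔽] [Fintype 𝔽] (h𝔽 : Fintype.card 𝔽 = q) :
    (Nat.card {M : Matrix (Fin n ⊕ Fin n) (Fin n ⊕ Fin n) 𝔽 //
        M * (Matrix.fromBlocks 0 1 (-1) 0) * M.transpose = Matrix.fromBlocks 0 1 (-1) 0} : ℤ) =
      (q : ℤ) ^ (n ^ 2) * ∏ i ∈ Finset.Icc 1 n, ((q : ℤ) ^ (2 * i) - 1) := by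
  classical
  have hMB : ∀ M : Matrix (Fin n ⊕ Fin n) (Fin n ⊕ Fin n) 𝔽, ∀ i j,
      (M * Jm n * Mᵀ : Matrix (Fin n ⊕ Fin n) (Fin n ⊕ Fin n) 𝔽) i j
        = Bf n (M i) (M j) := by
    intro M i j
    rw [Bf_apply]
    simp only [Matrix.mul_apply, Matrix.transpose_apply, dotProduct, Matrix.mulVec,
      Finset.sum_mul, Finset.mul_sum]
    rw [Finset.sum_comm]
    exact Finset.sum_congr rfl fun k _ => Finset.sum_congr rfl fun l _ => by ring
  have hcond : ∀ M : Matrix (Fin n ⊕ Fin n) (Fin n ⊕ Fin n) 𝔽,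
      (M * Jm n * Mᵀ = Jm n) ↔ ∀ i j, Bf n (M i) (M j) = Jm n i j := by
    intro M
    rw [← Matrix.ext_iff]
    exact forall₂_congr fun i j => by rw [hMB M i j]
  have e : {M : Matrix (Fin n ⊕ Fin n) (Fin n ⊕ Fin n) 𝔽 //
        M * (Matrix.fromBlocks 0 1 (-1) 0) * M.transpose = Matrix.fromBlocks 0 1 (-1) 0}
      ≃ {f : (Fin n ⊕ Fin n) → ((Fin n ⊕ Fin n) → 𝔽) //
          ∀ i j, Bf n (f i) (f j) = Jm n i j} :=
    { toFun := fun M => ⟨fun i => M.1 i, (hcond M.1).1 M.2⟩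
      invFun := fun f => ⟨Matrix.of f.1, (hcond (Matrix.of f.1)).2 f.2⟩
      left_inv := fun _ => rfl
      right_inv := fun _ => rfl }
  rw [Nat.card_congr e]
  rw [sp_count q h𝔽 n ((Fin n ⊕ Fin n) → 𝔽) (Bf n) (Bf_alt n) (Bf_nondeg n)
    (finrank_pi_sum n)]
  rw [Finset.prod_mul_distrib, Finset.prod_pow_eq_pow_sum, sum_odd_sq]
  ring
end

section
/- (Bruhat decomposition count.) Let 𝔽 be a finite field and n ≥ 1, let G = GL_n(𝔽), and let B ≤ G be the subgroup of invertible upper-triangular matrices. Then the number of double cosets B g B in G is n!. -/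
open Matrix Equiv

set_option maxHeartbeats 1000000

namespace Bruhat

variable {𝔽 : Type*} [Field 𝔽] {n : ℕ}

/-- The Borel subgroup of invertible upper triangular matrices. -/
def Borel (𝔽 : Type*) [Field 𝔽] (n : ℕ) :
    Subgroup (Matrix.GeneralLinearGroup (Fin n) 𝔽) where
  carrier := {g | Matrix.BlockTriangular (g : Matrix (Fin n) (Fin n) 𝔽) id}
  one_mem' := Matrix.blockTriangular_one
  mul_mem' := fun ha hb => ha.mul hb
  inv_mem' := by
    intro g hg
    have : Invertible (g : Matrix (Fin n) (Fin n) 𝔽) := g.invertible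
    show Matrix.BlockTriangular ((g⁻¹ : _) : Matrix (Fin n) (Fin n) 𝔽) id
    rw [Matrix.coe_units_inv]
    exact Matrix.blockTriangular_inv_of_blockTriangular hg

/-- The permutation matrix of `σ`, with a `1` at position `(σ j, j)` for each `j`. -/
def permM (σ : Equiv.Perm (Fin n)) : Matrix (Fin n) (Fin n) 𝔽 :=
  (σ⁻¹).toPEquiv.toMatrix

lemma permM_mul (σ : Equiv.Perm (Fin n)) (M : Matrix (Fin n) (Fin n) 𝔽) :
    permM σ * M = M.submatrix ⇑σ⁻¹ id :=
  PEquiv.toMatrix_toPEquiv_mul _ _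

lemma mul_permM (σ : Equiv.Perm (Fin n)) (M : Matrix (Fin n) (Fin n) 𝔽) :
    M * permM σ = M.submatrix id ⇑σ := by
  rw [permM, PEquiv.mul_toMatrix_toPEquiv]
  rfl

lemma permM_mul_permM (σ τ : Equiv.Perm (Fin n)) :
    (permM σ * permM τ : Matrix (Fin n) (Fin n) 𝔽) = permM (σ * τ) := by
  rw [permM, permM, permM, ← PEquiv.toMatrix_trans, ← Equiv.toPEquiv_trans,
    _root_.mul_inv_rev, Equiv.Perm.mul_def]

lemma permM_one : (permM 1 : Matrix (Fin n) (Fin n) 𝔽) = 1 := by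
  rw [permM, inv_one]
  show (Equiv.toPEquiv (Equiv.refl _)).toMatrix = 1
  rw [Equiv.toPEquiv_refl, PEquiv.toMatrix_refl]

/-- Permutation matrices as a monoid hom into `GL n 𝔽`. -/
def permGL : Equiv.Perm (Fin n) →* Matrix.GeneralLinearGroup (Fin n) 𝔽 :=
  MonoidHom.mk'
    (fun σ => ⟨permM σ, permM σ⁻¹,
      by rw [permM_mul_permM, mul_inv_cancel, permM_one],
      by rw [permM_mul_permM, inv_mul_cancel, permM_one]⟩)
    (fun σ τ => by
      apply Units.ext
      exact (permM_mul_permM σ τ).symm)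

@[simp] lemma permGL_val (σ : Equiv.Perm (Fin n)) :
    ((permGL σ : Matrix.GeneralLinearGroup (Fin n) 𝔽) : Matrix (Fin n) (Fin n) 𝔽)
      = permM σ := rfl

/-! ### Embedding 2x2 matrices at positions `i, j` -/

/-- The "corner" embedding of a 2x2 matrix at rows/columns `i, j` (not unital). -/
def psi (i j : Fin n) (A : Matrix (Fin 2) (Fin 2) 𝔽) : Matrix (Fin n) (Fin n) 𝔽 :=
  single i i (A 0 0) + single i j (A 0 1) +
    single j i (A 1 0) + single j j (A 1 1)

/-- The unital embedding of a 2x2 matrix at rows/columns `i, j`: identity elsewhere. -/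
def phi (i j : Fin n) (A : Matrix (Fin 2) (Fin 2) 𝔽) : Matrix (Fin n) (Fin n) 𝔽 :=
  1 - psi i j 1 + psi i j A

variable {i j : Fin n}

lemma psi_mul (h : i ≠ j) (A B : Matrix (Fin 2) (Fin 2) 𝔽) :
    psi i j A * psi i j B = psi i j (A * B) := by
  simp only [psi, Matrix.add_mul, Matrix.mul_add, Matrix.single_mul_single_same,
    Matrix.single_mul_single_of_ne _ _ _ _ h _, Matrix.single_mul_single_of_ne _ _ _ _ h.symm _,
    Matrix.mul_apply, Fin.sum_univ_two, Matrix.single_add, add_zero, zero_add]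
  abel

lemma phi_mul (h : i ≠ j) (A B : Matrix (Fin 2) (Fin 2) 𝔽) :
    phi i j A * phi i j B = phi i j (A * B) := by
  simp only [phi, sub_eq_add_neg, mul_add, add_mul, neg_mul, mul_neg, one_mul, mul_one,
    psi_mul h, Matrix.one_mul, Matrix.mul_one, neg_neg]
  abel

lemma phi_one : phi i j (1 : Matrix (Fin 2) (Fin 2) 𝔽) = 1 := by
  rw [phi, sub_add_cancel]

lemma phi_apply (h : i ≠ j) (A : Matrix (Fin 2) (Fin 2) 𝔽) (r c : Fin n) :
    phi i j A r c =
      if r = i then (if c = i then A 0 0 else if c = j then A 0 1 else 0)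
      else if r = j then (if c = i then A 1 0 else if c = j then A 1 1 else 0)
      else (if r = c then (1:𝔽) else 0) := by
  simp only [phi, psi, Matrix.add_apply, Matrix.sub_apply, Matrix.one_apply,
    Matrix.single, Matrix.of_apply]
  by_cases hri : r = i <;> by_cases hrj : r = j <;>
    by_cases hci : c = i <;> by_cases hcj : c = j <;>
      simp_all [Matrix.one_apply, eq_comm] <;> ring_nf <;> simp_all <;> try ring

lemma permM_apply (σ : Equiv.Perm (Fin n)) (r c : Fin n) :
    (permM σ : Matrix (Fin n) (Fin n) 𝔽) r c = if σ⁻¹ r = c then 1 else 0 := by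
  rw [permM, PEquiv.toMatrix_apply, Equiv.toPEquiv_apply]
  simp [eq_comm]

lemma phi_transvection_upper (c : 𝔽) : phi i j !![1, c; 0, 1] = transvection i j c := by
  rw [phi, transvection]
  simp [psi, Matrix.one_apply]
  abel

lemma phi_transvection_lower (c : 𝔽) : phi i j !![1, 0; c, 1] = transvection j i c := by
  rw [phi, transvection]
  simp [psi, Matrix.one_apply]
  abel

lemma phi_swap (h : i ≠ j) :
    phi i j !![0, 1; 1, 0] = (permM (Equiv.swap i j) : Matrix (Fin n) (Fin n) 𝔽) := by
  ext r c
  rw [phi_apply h, permM_apply, Equiv.swap_inv]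
  rcases eq_or_ne r i with rfl | hri
  · rw [Equiv.swap_apply_left]
    rcases eq_or_ne c j with rfl | hcj
    · simp [h.symm]
    · simp [h.symm, hcj, Ne.symm hcj]
  · rcases eq_or_ne r j with rfl | hrj
    · rw [Equiv.swap_apply_right]
      rcases eq_or_ne c i with rfl | hci
      · simp [h.symm, hri]
      · simp [h.symm, hri, hci, Ne.symm hci]
    · rw [Equiv.swap_apply_of_ne_of_ne hri hrj]
      simp [hri, hrj]

/-! ### Units -/

/-- Transvections as units of the matrix ring. -/
def Tu (i j : Fin n) (h : i ≠ j) (c : 𝔽) : Matrix.GeneralLinearGroup (Fin n) 𝔽 :=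
  ⟨transvection i j c, transvection i j (-c),
    by rw [transvection_mul_transvection_same _ _ h, add_neg_cancel, transvection_zero],
    by rw [transvection_mul_transvection_same _ _ h, neg_add_cancel, transvection_zero]⟩

@[simp] lemma Tu_val (h : i ≠ j) (c : 𝔽) : (Tu i j h c : Matrix (Fin n) (Fin n) 𝔽) =
    transvection i j c := rfl

lemma Tu_inv (h : i ≠ j) (c : 𝔽) : (Tu i j h c)⁻¹ = Tu i j h (-c) := by
  apply Units.ext; rfl

/-- `phi` on units. -/
def phiu (h : i ≠ j) (A : (Matrix (Fin 2) (Fin 2) 𝔽)ˣ) : Matrix.GeneralLinearGroup (Fin n) 𝔽 :=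
  ⟨phi i j A, phi i j ↑A⁻¹,
    by rw [phi_mul h, Units.mul_inv, phi_one],
    by rw [phi_mul h, Units.inv_mul, phi_one]⟩

@[simp] lemma phiu_val (h : i ≠ j) (A : (Matrix (Fin 2) (Fin 2) 𝔽)ˣ) :
    (phiu h A : Matrix (Fin n) (Fin n) 𝔽) = phi i j A := rfl

/-- Diagonal units. -/
def Du (d : Fin n → 𝔽) (hd : ∀ k, d k ≠ 0) : Matrix.GeneralLinearGroup (Fin n) 𝔽 :=
  ⟨diagonal d, diagonal fun k => (d k)⁻¹,
    by rw [diagonal_mul_diagonal]; convert diagonal_one; exact mul_inv_cancel₀ (hd _),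
    by rw [diagonal_mul_diagonal]; convert diagonal_one; exact inv_mul_cancel₀ (hd _)⟩

/-! ### Borel membership -/

lemma transvection_mem_Borel (hij : i < j) (c : 𝔽) :
    Tu i j hij.ne c ∈ Borel 𝔽 n := by
  intro r s hrs
  simp only [id] at hrs
  show (transvection i j c) r s = 0
  rw [transvection, Matrix.add_apply, Matrix.one_apply_ne hrs.ne',
    Matrix.single_apply_of_ne, add_zero]
  rintro ⟨rfl, rfl⟩
  exact absurd hij (not_lt.2 hrs.le)

lemma phiu_mem_Borel (hij : i < j) (A : (Matrix (Fin 2) (Fin 2) 𝔽)ˣ)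
    (hA : (A : Matrix (Fin 2) (Fin 2) 𝔽) 1 0 = 0) : phiu hij.ne A ∈ Borel 𝔽 n := by
  intro r s hrs
  simp only [id] at hrs
  show (phi i j (A : Matrix (Fin 2) (Fin 2) 𝔽)) r s = 0
  rw [phi_apply hij.ne]
  by_cases hri : r = i
  · subst hri
    simp [hrs.ne, ne_of_lt (hrs.trans hij)]
  · by_cases hrj : r = j
    · subst hrj
      by_cases hsi : s = i
      · simp [hij.ne', hsi, hA]
      · simp [hij.ne', hsi, hrs.ne]
    · simp [hri, hrj, hrs.ne']

lemma Du_mem_Borel (d : Fin n → 𝔽) (hd : ∀ k, d k ≠ 0) : Du d hd ∈ Borel 𝔽 n :=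
  Matrix.blockTriangular_diagonal d

/-- Diagonal entries of an invertible upper triangular matrix are nonzero. -/
lemma diag_ne_zero_of_mem_Borel {b : Matrix.GeneralLinearGroup (Fin n) 𝔽}
    (hb : b ∈ Borel 𝔽 n) (k : Fin n) : (b : Matrix (Fin n) (Fin n) 𝔽) k k ≠ 0 := by
  have hdet : (b : Matrix (Fin n) (Fin n) 𝔽).det ≠ 0 := by
    have := (Matrix.isUnit_iff_isUnit_det _).1 b.isUnit
    exact this.ne_zero
  rw [Matrix.det_of_upperTriangular hb] at hdet
  exact Finset.prod_ne_zero_iff.1 hdet k (Finset.mem_univ k)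

/-! ### Unit algebra -/

lemma Tu_mul_same (h : i ≠ j) (c d : 𝔽) :
    Tu i j h c * Tu i j h d = Tu i j h (c + d) :=
  Units.ext (transvection_mul_transvection_same _ _ h c d)

lemma Tu_zero (h : i ≠ j) : Tu i j h (0 : 𝔽) = 1 :=
  Units.ext (transvection_zero _ _)

lemma transvection_comm {i k j : Fin n} (hik : i ≠ k) (hkj : k ≠ j) (hij : i ≠ j) (c d : 𝔽) :
    transvection i k c * transvection k j d
      = transvection k j d * transvection i k c * transvection i j (c * d) := by
  simp only [transvection, add_mul, mul_add, one_mul, mul_one, Matrix.single_mul_single_same,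
    Matrix.single_mul_single_of_ne _ _ _ _ hij.symm _, Matrix.single_mul_single_of_ne _ _ _ _
    hik.symm _, add_zero, zero_add, one_mul]
  abel

lemma Tu_comm {i k j : Fin n} (hik : i ≠ k) (hkj : k ≠ j) (hij : i ≠ j) (c d : 𝔽) :
    Tu i k hik c * Tu k j hkj d
      = Tu k j hkj d * Tu i k hik c * Tu i j hij (c * d) :=
  Units.ext (transvection_comm hik hkj hij c d)

/-! ### 2x2 units -/

/-- Upper unitriangular 2x2. -/
def U2 (c : 𝔽) : (Matrix (Fin 2) (Fin 2) 𝔽)ˣ where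
  val := !![1, c; 0, 1]
  inv := !![1, -c; 0, 1]
  val_inv := by ext a b; fin_cases a <;> fin_cases b <;>
    simp [Matrix.mul_apply, Fin.sum_univ_two]
  inv_val := by ext a b; fin_cases a <;> fin_cases b <;>
    simp [Matrix.mul_apply, Fin.sum_univ_two]

/-- Lower unitriangular 2x2. -/
def L2 (c : 𝔽) : (Matrix (Fin 2) (Fin 2) 𝔽)ˣ where
  val := !![1, 0; c, 1]
  inv := !![1, 0; -c, 1]
  val_inv := by ext a b; fin_cases a <;> fin_cases b <;>
    simp [Matrix.mul_apply, Fin.sum_univ_two]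
  inv_val := by ext a b; fin_cases a <;> fin_cases b <;>
    simp [Matrix.mul_apply, Fin.sum_univ_two]

/-- The 2x2 swap. -/
def S2 : (Matrix (Fin 2) (Fin 2) 𝔽)ˣ where
  val := !![0, 1; 1, 0]
  inv := !![0, 1; 1, 0]
  val_inv := by ext a b; fin_cases a <;> fin_cases b <;>
    simp [Matrix.mul_apply, Fin.sum_univ_two]
  inv_val := by ext a b; fin_cases a <;> fin_cases b <;>
    simp [Matrix.mul_apply, Fin.sum_univ_two]

/-- The 2x2 upper triangular `!![c, 1; 0, -c⁻¹]`. -/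
def W2 (c : 𝔽) (hc : c ≠ 0) : (Matrix (Fin 2) (Fin 2) 𝔽)ˣ where
  val := !![c, 1; 0, -c⁻¹]
  inv := !![c⁻¹, 1; 0, -c]
  val_inv := by
    ext a b; fin_cases a <;> fin_cases b <;>
      simp [Matrix.mul_apply, Fin.sum_univ_two] <;> field_simp
  inv_val := by
    ext a b; fin_cases a <;> fin_cases b <;>
      simp [Matrix.mul_apply, Fin.sum_univ_two] <;> field_simp

/-- 2x2 diagonal unit. -/
def D2 (a b : 𝔽) (ha : a ≠ 0) (hb : b ≠ 0) : (Matrix (Fin 2) (Fin 2) 𝔽)ˣ where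
  val := !![a, 0; 0, b]
  inv := !![a⁻¹, 0; 0, b⁻¹]
  val_inv := by
    ext r s; fin_cases r <;> fin_cases s <;>
      simp [Matrix.mul_apply, Fin.sum_univ_two] <;> field_simp
  inv_val := by
    ext r s; fin_cases r <;> fin_cases s <;>
      simp [Matrix.mul_apply, Fin.sum_univ_two] <;> field_simp

lemma U2_mul_S2 {c : 𝔽} (hc : c ≠ 0) : U2 c * S2 = L2 c⁻¹ * W2 c hc := by
  apply Units.ext
  show (!![1, c; 0, 1] * !![0, 1; 1, 0] : Matrix (Fin 2) (Fin 2) 𝔽)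
    = !![1, 0; c⁻¹, 1] * !![c, 1; 0, -c⁻¹]
  ext a b; fin_cases a <;> fin_cases b <;>
    simp [Matrix.mul_apply, Fin.sum_univ_two] <;> field_simp

lemma L2_decomp {c : 𝔽} (hc : c ≠ 0) :
    L2 c = U2 c⁻¹ * D2 (-c⁻¹) c (by simpa using hc) hc * S2 * U2 c⁻¹ := by
  apply Units.ext
  show (!![1, 0; c, 1] : Matrix (Fin 2) (Fin 2) 𝔽)
    = !![1, c⁻¹; 0, 1] * !![-c⁻¹, 0; 0, c] * !![0, 1; 1, 0] * !![1, c⁻¹; 0, 1]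
  ext a b; fin_cases a <;> fin_cases b <;>
    simp [Matrix.mul_apply, Fin.sum_univ_two] <;> field_simp <;> ring

/-! ### `phiu` as a multiplicative map, special values -/

lemma phiu_mul (h : i ≠ j) (A B : (Matrix (Fin 2) (Fin 2) 𝔽)ˣ) :
    phiu h (A * B) = phiu h A * phiu h B := by
  apply Units.ext
  show phi i j ((A * B : _ˣ) : Matrix (Fin 2) (Fin 2) 𝔽) = phi i j ↑A * phi i j ↑B
  rw [Units.val_mul, phi_mul h]

lemma phiu_U2 (h : i ≠ j) (c : 𝔽) : phiu h (U2 c) = Tu i j h c :=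
  Units.ext (phi_transvection_upper c)

lemma phiu_L2 (h : i ≠ j) (c : 𝔽) : phiu h (L2 c) = Tu j i h.symm c :=
  Units.ext (phi_transvection_lower c)

lemma phiu_S2 (h : i ≠ j) : phiu h (S2 : (Matrix (Fin 2) (Fin 2) 𝔽)ˣ)
    = permGL (Equiv.swap i j) :=
  Units.ext (phi_swap h)

/-! ### Conjugation of transvections by permutation matrices -/

lemma permGL_conj (σ : Equiv.Perm (Fin n)) (h : i ≠ j) (h' : σ i ≠ σ j) (c : 𝔽) :
    (permGL σ) * Tu i j h c = Tu (σ i) (σ j) h' c * permGL σ := by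
  apply Units.ext
  show permM σ * transvection i j c = transvection (σ i) (σ j) c * permM σ
  rw [permM_mul, mul_permM]
  ext r s
  rw [Matrix.submatrix_apply, Matrix.submatrix_apply]
  simp only [transvection, Matrix.add_apply, Matrix.one_apply, Matrix.single,
    Matrix.of_apply, id]
  have e1 : (σ⁻¹ r = s) = (r = σ s) := propext (by
    constructor
    · rintro rfl; simp
    · rintro rfl; simp)
  have e2 : (i = σ⁻¹ r ∧ j = s) = (σ i = r ∧ σ j = σ s) := propext (by
    constructor
    · rintro ⟨rfl, rfl⟩; simp
    · rintro ⟨h1, h2⟩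
      refine ⟨?_, σ.injective h2⟩
      rw [← h1]; simp)
  simp only [e1, e2]

/-! ### Double coset machinery -/

variable (𝔽 n) in
/-- Shorthand for the double coset class of `x`. -/
abbrev mkB (x : Matrix.GeneralLinearGroup (Fin n) 𝔽) :
    DoubleCoset.Quotient (↑(Borel 𝔽 n) : Set (Matrix.GeneralLinearGroup (Fin n) 𝔽))
      (↑(Borel 𝔽 n) : Set (Matrix.GeneralLinearGroup (Fin n) 𝔽)) :=
  DoubleCoset.mk (Borel 𝔽 n) (Borel 𝔽 n) x

lemma mkB_mul_left {b : Matrix.GeneralLinearGroup (Fin n) 𝔽} (hb : b ∈ Borel 𝔽 n)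
    (x : Matrix.GeneralLinearGroup (Fin n) 𝔽) : mkB 𝔽 n (b * x) = mkB 𝔽 n x :=
  (DoubleCoset.eq _ _ _ _).2 ⟨b⁻¹, (Borel 𝔽 n).inv_mem hb, 1, (Borel 𝔽 n).one_mem, by group⟩

lemma mkB_mul_right {b : Matrix.GeneralLinearGroup (Fin n) 𝔽} (hb : b ∈ Borel 𝔽 n)
    (x : Matrix.GeneralLinearGroup (Fin n) 𝔽) : mkB 𝔽 n (x * b) = mkB 𝔽 n x :=
  (DoubleCoset.eq _ _ _ _).2 ⟨1, (Borel 𝔽 n).one_mem, b⁻¹, (Borel 𝔽 n).inv_mem hb, by group⟩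

variable (𝔽 n) in
/-- `x` lies in the double coset of some permutation matrix. -/
def SP (x : Matrix.GeneralLinearGroup (Fin n) 𝔽) : Prop :=
  ∃ τ : Equiv.Perm (Fin n), mkB 𝔽 n x = mkB 𝔽 n (permGL τ)

lemma SP_one : SP 𝔽 n 1 := ⟨1, by rw [_root_.map_one]⟩

lemma SP.mul_mem {x b : Matrix.GeneralLinearGroup (Fin n) 𝔽} (hx : SP 𝔽 n x)
    (hb : b ∈ Borel 𝔽 n) : SP 𝔽 n (x * b) := by
  obtain ⟨τ, hτ⟩ := hx
  exact ⟨τ, (mkB_mul_right hb x).trans hτ⟩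

/-! ### Conjugating a Borel element with vanishing `(i,j)` entry by an adjacent swap -/

lemma swap_conj_mem_Borel (hij : i < j) (hadj : (j : ℕ) = (i : ℕ) + 1)
    {b : Matrix.GeneralLinearGroup (Fin n) 𝔽} (hb : b ∈ Borel 𝔽 n)
    (hb0 : (b : Matrix (Fin n) (Fin n) 𝔽) i j = 0) :
    permGL (Equiv.swap i j) * b * permGL (Equiv.swap i j) ∈ Borel 𝔽 n := by
  have hsub : (permM (Equiv.swap i j) * (b : Matrix (Fin n) (Fin n) 𝔽) *
      permM (Equiv.swap i j)) = (b : Matrix (Fin n) (Fin n) 𝔽).submatrix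
        (Equiv.swap i j) (Equiv.swap i j) := by
    rw [permM_mul, mul_permM, Matrix.submatrix_submatrix, Equiv.swap_inv]
    rfl
  intro r s hrs
  show (permM (Equiv.swap i j) * (b : Matrix (Fin n) (Fin n) 𝔽) *
      permM (Equiv.swap i j) : Matrix (Fin n) (Fin n) 𝔽) r s = 0
  rw [hsub, Matrix.submatrix_apply]
  simp only [id] at hrs
  rcases eq_or_ne i r with rfl | hri
  · have hsi : s ≠ i := hrs.ne
    have hsj : s ≠ j := (hrs.trans hij).ne
    rw [Equiv.swap_apply_left, Equiv.swap_apply_of_ne_of_ne hsi hsj]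
    exact hb (show (id s : Fin n) < id j from hrs.trans hij)
  · rcases eq_or_ne j r with rfl | hrj
    · rw [Equiv.swap_apply_right]
      rcases eq_or_ne i s with rfl | hsi
      · rw [Equiv.swap_apply_left]; exact hb0
      · have hsj : s ≠ j := hrs.ne
        rw [Equiv.swap_apply_of_ne_of_ne hsi.symm hsj]
        refine hb (show Fin.val s < Fin.val i from ?_)
        have h1 : (s : ℕ) < (j : ℕ) := hrs
        have h2 : (s : ℕ) ≠ (i : ℕ) := fun e => hsi (Fin.ext e.symm)
        omega
    · rw [Equiv.swap_apply_of_ne_of_ne (Ne.symm hri) (Ne.symm hrj)]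
      rcases eq_or_ne i s with rfl | hsi
      · rw [Equiv.swap_apply_left]
        refine hb (show Fin.val j < Fin.val r from ?_)
        have h1 : (i : ℕ) < (r : ℕ) := hrs
        have h2 : (r : ℕ) ≠ (j : ℕ) := fun e => hrj (Fin.ext e.symm)
        omega
      · rcases eq_or_ne j s with rfl | hsj
        · rw [Equiv.swap_apply_right]
          exact hb (show (id i : Fin n) < id r from hij.trans hrs)
        · rw [Equiv.swap_apply_of_ne_of_ne (Ne.symm hsi) (Ne.symm hsj)]
          exact hb hrs

/-! ### The key Tits-style lemmas -/

lemma key_swap (hij : i < j) (hadj : (j : ℕ) = (i : ℕ) + 1) (σ : Equiv.Perm (Fin n))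
    {b : Matrix.GeneralLinearGroup (Fin n) 𝔽} (hb : b ∈ Borel 𝔽 n) :
    SP 𝔽 n (permGL σ * b * permGL (Equiv.swap i j)) := by
  classical
  have hne : i ≠ j := hij.ne
  have hjj := diag_ne_zero_of_mem_Borel hb j
  set c₀ : 𝔽 := (b : Matrix (Fin n) (Fin n) 𝔽) i j / (b : Matrix (Fin n) (Fin n) 𝔽) j j
    with hc₀
  set b' := Tu i j hne (-c₀) * b with hb'def
  have hb'mem : b' ∈ Borel 𝔽 n := (Borel 𝔽 n).mul_mem (transvection_mem_Borel hij _) hb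
  have hb'0 : (b' : Matrix (Fin n) (Fin n) 𝔽) i j = 0 := by
    show (transvection i j (-c₀) * (b : Matrix (Fin n) (Fin n) 𝔽)) i j = 0
    rw [transvection_mul_apply_same, hc₀]
    field_simp
    ring
  have hfac : b = Tu i j hne c₀ * b' := by
    rw [hb'def, ← mul_assoc, Tu_mul_same, add_neg_cancel, Tu_zero, one_mul]
  have hss : permGL (Equiv.swap i j) * permGL (Equiv.swap i j)
      = (1 : Matrix.GeneralLinearGroup (Fin n) 𝔽) := by
    rw [← _root_.map_mul, Equiv.swap_mul_self, _root_.map_one]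
  have hstep : permGL σ * b * permGL (Equiv.swap i j)
      = permGL σ * Tu i j hne c₀ * permGL (Equiv.swap i j) *
        (permGL (Equiv.swap i j) * b' * permGL (Equiv.swap i j)) := by
    rw [hfac]
    simp only [mul_assoc]
    rw [← mul_assoc (permGL (Equiv.swap i j)) (permGL (Equiv.swap i j)), hss, one_mul]
  have main : SP 𝔽 n (permGL σ * Tu i j hne c₀ * permGL (Equiv.swap i j)) := by
    rcases eq_or_ne c₀ 0 with h0 | h0
    · rw [h0, Tu_zero, mul_one, ← _root_.map_mul]
      exact ⟨σ * Equiv.swap i j, rfl⟩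
    · rcases lt_or_gt_of_ne (fun e => hne (σ.injective e) : σ i ≠ σ j) with hlt | hgt
      · rw [permGL_conj σ hne hlt.ne c₀]
        refine ⟨σ * Equiv.swap i j, ?_⟩
        rw [mul_assoc, ← _root_.map_mul]
        exact mkB_mul_left (transvection_mem_Borel hlt c₀) _
      · have hW0 : ((W2 c₀ h0 : (Matrix (Fin 2) (Fin 2) 𝔽)ˣ) :
            Matrix (Fin 2) (Fin 2) 𝔽) 1 0 = 0 := by
          show (!![c₀, 1; 0, -c₀⁻¹] : Matrix (Fin 2) (Fin 2) 𝔽) 1 0 = 0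
          simp
        have hTuW : Tu i j hne c₀ * permGL (Equiv.swap i j)
            = Tu j i hne.symm c₀⁻¹ * phiu hne (W2 c₀ h0) := by
          rw [← phiu_U2 hne c₀, ← phiu_S2 hne, ← phiu_L2 hne c₀⁻¹, ← phiu_mul, ← phiu_mul,
            U2_mul_S2 h0]
        rw [mul_assoc, hTuW, ← mul_assoc]
        rw [permGL_conj σ hne.symm hgt.ne c₀⁻¹]
        refine ⟨σ, ?_⟩
        calc mkB 𝔽 n (Tu (σ j) (σ i) hgt.ne c₀⁻¹ * permGL σ * phiu hne (W2 c₀ h0))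
            = mkB 𝔽 n (Tu (σ j) (σ i) hgt.ne c₀⁻¹ * permGL σ) :=
              mkB_mul_right (phiu_mem_Borel hij _ hW0) _
          _ = mkB 𝔽 n (permGL σ) := mkB_mul_left (transvection_mem_Borel hgt _) _
  obtain ⟨τ, hτ⟩ := main
  refine ⟨τ, ?_⟩
  rw [hstep]
  exact (mkB_mul_right (swap_conj_mem_Borel hij hadj hb'mem hb'0) _).trans hτ

lemma key_lower_adj (hij : i < j) (hadj : (j : ℕ) = (i : ℕ) + 1) (σ : Equiv.Perm (Fin n))
    {b : Matrix.GeneralLinearGroup (Fin n) 𝔽} (hb : b ∈ Borel 𝔽 n) (c : 𝔽) :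
    SP 𝔽 n (permGL σ * b * Tu j i hij.ne' c) := by
  rcases eq_or_ne c 0 with rfl | hc
  · rw [Tu_zero, mul_one]
    exact ⟨σ, mkB_mul_right hb _⟩
  · have hcinv : -c⁻¹ ≠ 0 := neg_ne_zero.2 (inv_ne_zero hc)
    set B1 := phiu hij.ne (U2 c⁻¹ * D2 (-c⁻¹) c hcinv hc) with hB1
    have hB10 : (((U2 c⁻¹ * D2 (-c⁻¹) c hcinv hc : (Matrix (Fin 2) (Fin 2) 𝔽)ˣ)) :
        Matrix (Fin 2) (Fin 2) 𝔽) 1 0 = 0 := by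
      show ((!![1, c⁻¹; 0, 1] : Matrix (Fin 2) (Fin 2) 𝔽) * !![-c⁻¹, 0; 0, c]) 1 0 = 0
      simp [Matrix.mul_apply, Fin.sum_univ_two]
    have hB1mem : B1 ∈ Borel 𝔽 n := phiu_mem_Borel hij _ hB10
    have hL : Tu j i hij.ne' c
        = B1 * permGL (Equiv.swap i j) * Tu i j hij.ne c⁻¹ := by
      have h1 : Tu j i hij.ne' c = phiu hij.ne (L2 c) := (phiu_L2 hij.ne c).symm
      rw [h1, L2_decomp hc, phiu_mul, phiu_mul, phiu_S2, phiu_U2, hB1]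
    have hmain : SP 𝔽 n (permGL σ * (b * B1) * permGL (Equiv.swap i j)) :=
      key_swap hij hadj σ ((Borel 𝔽 n).mul_mem hb hB1mem)
    obtain ⟨τ, hτ⟩ := hmain
    refine ⟨τ, ?_⟩
    have e : permGL σ * b * (B1 * permGL (Equiv.swap i j) * Tu i j hij.ne c⁻¹)
        = (permGL σ * (b * B1) * permGL (Equiv.swap i j)) * Tu i j hij.ne c⁻¹ := by
      simp only [mul_assoc]
    rw [hL, e]
    exact (mkB_mul_right (transvection_mem_Borel hij c⁻¹) _).trans hτ

lemma SP.mul_upper {x : Matrix.GeneralLinearGroup (Fin n) 𝔽} (hx : SP 𝔽 n x)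
    (hij : i < j) (c : 𝔽) : SP 𝔽 n (x * Tu i j hij.ne c) :=
  hx.mul_mem (transvection_mem_Borel hij c)

lemma SP.mul_lower (m : ℕ) : ∀ (i j : Fin n) (hji : j < i), (i : ℕ) - (j : ℕ) ≤ m →
    ∀ (c : 𝔽) (x : Matrix.GeneralLinearGroup (Fin n) 𝔽), SP 𝔽 n x →
      SP 𝔽 n (x * Tu i j hji.ne' c) := by
  induction m with
  | zero =>
    intro i j hji hm c x hx
    exfalso
    have h1 : (j : ℕ) < (i : ℕ) := hji
    omega
  | succ m ih =>
    intro i j hji hm c x hx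
    by_cases hsm : (i : ℕ) - (j : ℕ) ≤ m
    · exact ih i j hji hsm c x hx
    · by_cases hadj : (i : ℕ) = (j : ℕ) + 1
      · obtain ⟨σ, hσ⟩ := hx
        obtain ⟨b1, hb1, b2, hb2, heq⟩ := (DoubleCoset.eq _ _ _ _).1 hσ
        have hxeq : x = b1⁻¹ * (permGL σ * b2⁻¹) := by rw [heq]; group
        have hmain : SP 𝔽 n (permGL σ * b2⁻¹ * Tu i j hji.ne' c) :=
          key_lower_adj hji hadj σ ((Borel 𝔽 n).inv_mem hb2) c
        obtain ⟨τ, hτ⟩ := hmain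
        refine ⟨τ, ?_⟩
        have e : x * Tu i j hji.ne' c
            = b1⁻¹ * (permGL σ * b2⁻¹ * Tu i j hji.ne' c) := by
          rw [hxeq]; simp only [mul_assoc]
        rw [e]
        exact (mkB_mul_left ((Borel 𝔽 n).inv_mem hb1) _).trans hτ
      · have hji' : (j : ℕ) < (i : ℕ) := hji
        have hin : (i : ℕ) < n := i.isLt
        set k : Fin n := ⟨(j : ℕ) + 1, by omega⟩ with hkdef
        have hk : (k : ℕ) = (j : ℕ) + 1 := rfl
        have hjk : j < k := by rw [Fin.lt_def, hk]; omega
        have hki : k < i := by rw [Fin.lt_def, hk]; omega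
        have hcomm := Tu_comm (hki.ne' : i ≠ k) (hjk.ne' : k ≠ j) (hji.ne' : i ≠ j) c (1 : 𝔽)
        rw [mul_one] at hcomm
        have hT : Tu i j hji.ne' c = (Tu i k hki.ne' c)⁻¹ *
            ((Tu k j hjk.ne' 1)⁻¹ * (Tu i k hki.ne' c * Tu k j hjk.ne' 1)) := by
          rw [hcomm]; group
        rw [hT, Tu_inv, Tu_inv]
        have h1 := ih i k hki (by omega) (-c) x hx
        have h2 := ih k j hjk (by omega) (-1) _ h1
        have h3 := ih i k hki (by omega) c _ h2
        have h4 := ih k j hjk (by omega) 1 _ h3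
        have e : x * (Tu i k hki.ne' (-c) * (Tu k j hjk.ne' (-1) *
            (Tu i k hki.ne' c * Tu k j hjk.ne' 1)))
            = x * Tu i k hki.ne' (-c) * Tu k j hjk.ne' (-1) * Tu i k hki.ne' c *
              Tu k j hjk.ne' 1 := by
          simp only [mul_assoc]
        rw [e]
        exact h4

/-- Closure of `SP` under right multiplication by any transvection. -/
lemma SP.mul_transvection {x : Matrix.GeneralLinearGroup (Fin n) 𝔽} (hx : SP 𝔽 n x)
    (t : TransvectionStruct (Fin n) 𝔽) :
    SP 𝔽 n (x * Tu t.i t.j t.hij t.c) := by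
  rcases lt_trichotomy t.i t.j with hlt | heq | hgt
  · exact hx.mul_upper hlt t.c
  · exact absurd heq t.hij
  · exact SP.mul_lower n t.i t.j hgt (by omega) t.c x hx

/-- Closure of `SP` under right multiplication by a product of transvections. -/
lemma SP.mul_list (L : List (TransvectionStruct (Fin n) 𝔽)) :
    ∀ x : Matrix.GeneralLinearGroup (Fin n) 𝔽, SP 𝔽 n x →
      SP 𝔽 n (x * (L.map fun t => Tu t.i t.j t.hij t.c).prod) := by
  induction L with
  | nil => intro x hx; simpa using hx
  | cons t L ihL =>
    intro x hx
    have := ihL (x * Tu t.i t.j t.hij t.c) (hx.mul_transvection t)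
    simpa [mul_assoc] using this

lemma SP_all (x : Matrix.GeneralLinearGroup (Fin n) 𝔽) : SP 𝔽 n x := by
  classical
  obtain ⟨L, L', D, hM⟩ :=
    Matrix.Pivot.exists_list_transvec_mul_diagonal_mul_list_transvec
      (x : Matrix (Fin n) (Fin n) 𝔽)
  have hdetx : (x : Matrix (Fin n) (Fin n) 𝔽).det ≠ 0 :=
    ((Matrix.isUnit_iff_isUnit_det _).1 x.isUnit).ne_zero
  have hdetD : (Matrix.diagonal D).det ≠ 0 := by
    intro h0
    apply hdetx
    rw [hM, Matrix.det_mul, Matrix.det_mul, h0, mul_zero, zero_mul]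
  have hD : ∀ k, D k ≠ 0 := by
    rw [Matrix.det_diagonal] at hdetD
    exact fun k => Finset.prod_ne_zero_iff.1 hdetD k (Finset.mem_univ k)
  -- list of units
  have hval : ∀ L₀ : List (TransvectionStruct (Fin n) 𝔽),
      (((L₀.map fun t => Tu t.i t.j t.hij t.c).prod :
        Matrix.GeneralLinearGroup (Fin n) 𝔽) : Matrix (Fin n) (Fin n) 𝔽)
        = (L₀.map Matrix.TransvectionStruct.toMatrix).prod := by
    intro L₀
    induction L₀ with
    | nil => simp
    | cons t L₀ ih =>
      simp only [List.map_cons, List.prod_cons, Units.val_mul, ih]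
      rfl
  have hx : x = (L.map fun t => Tu t.i t.j t.hij t.c).prod * Du D hD *
      (L'.map fun t => Tu t.i t.j t.hij t.c).prod := by
    apply Units.ext
    rw [Units.val_mul, Units.val_mul, hval, hval]
    exact hM
  rw [hx]
  have h1 : SP 𝔽 n ((L.map fun t => Tu t.i t.j t.hij t.c).prod) := by
    have := SP.mul_list L 1 SP_one
    simpa using this
  have h2 := h1.mul_mem (Du_mem_Borel D hD)
  exact SP.mul_list L' _ h2

/-! ### Uniqueness: distinct permutations give distinct double cosets -/

lemma permGL_mk_injective {σ τ : Equiv.Perm (Fin n)}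
    (h : mkB 𝔽 n (permGL σ) = mkB 𝔽 n (permGL τ)) : σ = τ := by
  obtain ⟨b1, hb1, b2, hb2, heq⟩ := (DoubleCoset.eq _ _ _ _).1 h
  have hb2eq : b2 = (permGL σ)⁻¹ * b1⁻¹ * permGL τ := by rw [heq]; group
  have hX : Matrix.BlockTriangular
      ((b1⁻¹ : Matrix.GeneralLinearGroup (Fin n) 𝔽) : Matrix (Fin n) (Fin n) 𝔽) id :=
    (Borel 𝔽 n).inv_mem hb1
  have hval : (b2 : Matrix (Fin n) (Fin n) 𝔽)
      = ((b1⁻¹ : Matrix.GeneralLinearGroup (Fin n) 𝔽) :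
          Matrix (Fin n) (Fin n) 𝔽).submatrix ⇑σ ⇑τ := by
    rw [hb2eq, ← _root_.map_inv, Units.val_mul, Units.val_mul, permGL_val, permGL_val,
      permM_mul, inv_inv, mul_permM, Matrix.submatrix_submatrix]
    rfl
  have hle : ∀ k, (σ k : ℕ) ≤ (τ k : ℕ) := by
    intro k
    by_contra hlt
    push_neg at hlt
    have h0 : ((b1⁻¹ : Matrix.GeneralLinearGroup (Fin n) 𝔽) :
        Matrix (Fin n) (Fin n) 𝔽) (σ k) (τ k) = 0 :=
      hX (show (id (τ k) : Fin n) < id (σ k) from Fin.lt_def.2 hlt)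
    have hne := diag_ne_zero_of_mem_Borel hb2 k
    rw [hval, Matrix.submatrix_apply, h0] at hne
    exact hne rfl
  have hsum : ∑ k, ((σ k : ℕ)) = ∑ k, ((τ k : ℕ)) := by
    rw [Equiv.sum_comp σ (fun a : Fin n => (a : ℕ)),
      Equiv.sum_comp τ (fun a : Fin n => (a : ℕ))]
  have heqk : ∀ k, (σ k : ℕ) = (τ k : ℕ) := by
    intro k
    exact (Finset.sum_eq_sum_iff_of_le fun k _ => hle k).1 hsum k (Finset.mem_univ k)
  exact Equiv.ext fun k => Fin.ext (heqk k)

/-- The bijection between permutations and double cosets. -/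
lemma mkB_permGL_bijective :
    Function.Bijective (fun σ : Equiv.Perm (Fin n) =>
      mkB 𝔽 n (permGL σ)) := by
  constructor
  · intro σ τ h
    exact permGL_mk_injective h
  · intro q
    obtain ⟨τ, hτ⟩ := SP_all (Quotient.out q)
    exact ⟨τ, hτ.symm.trans (DoubleCoset.out_eq' (Borel 𝔽 n) (Borel 𝔽 n) q)⟩

end Bruhat

/-- **Bruhat decomposition count.** Let `𝔽` be a finite field, `n ≥ 1`, `G = GL_n(𝔽)` and
`B ≤ G` the Borel subgroup of invertible upper-triangular matrices. Then the number of
double cosets `B g B` in `G` is `n!`. -/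
theorem card_bruhat_double_cosets (𝔽 : Type*) [Field 𝔽] [Fintype 𝔽] (n : ℕ) (hn : 1 ≤ n) :
    Nat.card (DoubleCoset.Quotient
      {g : Matrix.GeneralLinearGroup (Fin n) 𝔽 |
        Matrix.BlockTriangular (g : Matrix (Fin n) (Fin n) 𝔽) id}
      {g : Matrix.GeneralLinearGroup (Fin n) 𝔽 |
        Matrix.BlockTriangular (g : Matrix (Fin n) (Fin n) 𝔽) id}) = Nat.factorial n := by
  have hset : {g : Matrix.GeneralLinearGroup (Fin n) 𝔽 |
      Matrix.BlockTriangular (g : Matrix (Fin n) (Fin n) 𝔽) id}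
      = (↑(Bruhat.Borel 𝔽 n) : Set (Matrix.GeneralLinearGroup (Fin n) 𝔽)) := rfl
  rw [hset]
  rw [← Nat.card_eq_of_bijective _ Bruhat.mkB_permGL_bijective]
  rw [Nat.card_eq_fintype_card, Fintype.card_perm, Fintype.card_fin]
end
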